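/- arXiv:1905.02169 — 3 statements merged into one kernel-verified Lean document; each statement's English description precedes it below -/
import Mathlib

section
/- Let K be a field, ν a valuation on K[x], μ a fixed extension of ν to K̄[x] where K̄ is a fixed algebraic closure of K. For every monic polynomial f ∈ K[x], one has δ(f) = ε(f). In particular, δ(f) does not depend on the choice of the extension μ of ν to K̄[x]. -/
open Polynomial

/-- A valuation on a commutative ring `R` with values in `Γ ∪ {∞}`. -/
def IsVal {R : Type*} [CommRing R] {Γ : Type*} [AddCommGroup Γ] [LinearOrder Γ] [IsOrderedAddMonoid Γ]
    (v : R → WithTop Γ) : Prop :=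
  (∀ a b, v (a * b) = v a + v b) ∧
  (∀ a b, min (v a) (v b) ≤ v (a + b)) ∧
  v 1 = 0 ∧ v 0 = ⊤

/-- The `i`-th coefficient of the `q`-expansion of `f`. -/
noncomputable def qCoeff {K : Type*} [Field K] (q f : K[X]) (i : ℕ) : K[X] :=
  (f /ₘ q ^ i) %ₘ q

/-- The `q`-truncation `ν_q` of a valuation `ν` on `K[x]`. -/
noncomputable def trunc {K : Type*} [Field K] {Γ : Type*} [AddCommGroup Γ] [LinearOrder Γ] [IsOrderedAddMonoid Γ]
    (v : K[X] → WithTop Γ) (q : K[X]) (f : K[X]) : WithTop Γ :=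
  (Finset.range (f.natDegree + 1)).inf fun i => v (qCoeff q f i * q ^ i)

/-- The quantity `(ν(f) - ν(∂_b f))/b`, an element of `Γ ∪ {±∞}`. -/
noncomputable def epsAt {K : Type*} [Field K] {Γ : Type*} [AddCommGroup Γ] [LinearOrder Γ] [IsOrderedAddMonoid Γ]
    [Module ℚ Γ] (v : K[X] → WithTop Γ) (f : K[X]) (b : ℕ) : WithBot (WithTop Γ) :=
  if h : v (hasseDeriv b f) = ⊤ then ⊥
  else (((v f).map fun c => (b : ℚ)⁻¹ • (c - (v (hasseDeriv b f)).untop h) : WithTop Γ) :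
    WithBot (WithTop Γ))

/-- `ε(f) = max_b (ν(f) - ν(∂_b f))/b` over positive integers `b`. -/
noncomputable def eps {K : Type*} [Field K] {Γ : Type*} [AddCommGroup Γ] [LinearOrder Γ] [IsOrderedAddMonoid Γ]
    [Module ℚ Γ] (v : K[X] → WithTop Γ) (f : K[X]) : WithBot (WithTop Γ) :=
  (Finset.Icc 1 f.natDegree).sup (epsAt v f)

/-- A (Spivakovsky) key polynomial for `ν`. -/
def IsKeyPoly {K : Type*} [Field K] {Γ : Type*} [AddCommGroup Γ] [LinearOrder Γ] [IsOrderedAddMonoid Γ]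
    [Module ℚ Γ] (v : K[X] → WithTop Γ) (Q : K[X]) : Prop :=
  Q.Monic ∧ ∀ f : K[X], eps v Q ≤ eps v f → Q.degree ≤ f.degree

/-- `f` and `g` have the same initial form in the graded algebra of `ν`. -/
def EquivIn {K : Type*} [Field K] {Γ : Type*} [AddCommGroup Γ] [LinearOrder Γ] [IsOrderedAddMonoid Γ]
    (v : K[X] → WithTop Γ) (f g : K[X]) : Prop :=
  v f = v g ∧ (v f < v (f - g) ∨ v f = ⊤)

/-- `g` ν-divides `f`. -/
def DvdIn {K : Type*} [Field K] {Γ : Type*} [AddCommGroup Γ] [LinearOrder Γ] [IsOrderedAddMonoid Γ]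
    (v : K[X] → WithTop Γ) (g f : K[X]) : Prop :=
  ∃ h : K[X], EquivIn v f (g * h)

/-- A MacLane–Vaquié key polynomial for `ν`. -/
def IsMVKeyPoly {K : Type*} [Field K] {Γ : Type*} [AddCommGroup Γ] [LinearOrder Γ] [IsOrderedAddMonoid Γ]
    (v : K[X] → WithTop Γ) (φ : K[X]) : Prop :=
  φ.Monic ∧
  (∀ f g : K[X], DvdIn v φ (f * g) → DvdIn v φ f ∨ DvdIn v φ g) ∧
  (∀ f : K[X], DvdIn v φ f → φ.degree ≤ f.degree)

/-- `α(Q)`: the minimal degree of a polynomial on which `ν_Q` differs from `ν`. -/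
noncomputable def alphaDeg {K : Type*} [Field K] {Γ : Type*} [AddCommGroup Γ] [LinearOrder Γ] [IsOrderedAddMonoid Γ]
    (v : K[X] → WithTop Γ) (Q : K[X]) : ℕ :=
  sInf {d | ∃ f : K[X], f.natDegree = d ∧ trunc v Q f < v f}

/-- `Ψ(Q)`: monic polynomials of degree `α(Q)` with `ν_Q(f) < ν(f)`. -/
def Psi {K : Type*} [Field K] {Γ : Type*} [AddCommGroup Γ] [LinearOrder Γ] [IsOrderedAddMonoid Γ]
    (v : K[X] → WithTop Γ) (Q : K[X]) : Set K[X] :=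
  {f | f.Monic ∧ trunc v Q f < v f ∧ f.natDegree = alphaDeg v Q}

section Helpers

variable {R : Type*} [CommRing R] {Γ : Type*} [AddCommGroup Γ] [LinearOrder Γ] [IsOrderedAddMonoid Γ]
  {v : R → WithTop Γ}

theorem hasseDeriv_linear_mul (a : R) (p : R[X]) (k : ℕ) :
    hasseDeriv (k+1) ((X - C a) * p) =
      (X - C a) * hasseDeriv (k+1) p + hasseDeriv k p := by
  rw [hasseDeriv_mul]
  rw [Finset.Nat.sum_antidiagonal_eq_sum_range_succ_mk]
  rw [← Finset.sum_subset (s₁ := ({0, 1} : Finset ℕ)) (h := by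
      intro i hi
      simp only [Finset.mem_insert, Finset.mem_singleton, Finset.mem_range] at hi ⊢
      omega)]
  · rw [Finset.sum_pair (by norm_num)]
    simp only [hasseDeriv_zero', hasseDeriv_one']
    rw [show derivative (X - C a) = 1 by simp]
    simp
  · intro i hi hni
    simp only [Finset.mem_insert, Finset.mem_singleton] at hni
    push_neg at hni
    simp only [Finset.mem_range] at hi
    dsimp only
    rw [map_sub, hasseDeriv_X _ (by omega), hasseDeriv_C _ _ (by omega)]
    simp

theorem hasseDeriv_multiset_prod [DecidableEq R] (s : Multiset R) (b : ℕ) :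
    hasseDeriv b ((s.map fun a => X - C a).prod) =
      ((s.powersetCard b).map fun t => ((s - t).map fun a => (X:R[X]) - C a).prod).sum := by
  induction s using Multiset.induction generalizing b with
  | empty =>
    cases b with
    | zero => simp [hasseDeriv_zero']
    | succ k => simp [Multiset.powersetCard_zero_right, hasseDeriv_apply_one _ (Nat.succ_pos k)]
  | cons a s ih =>
    cases b with
    | zero => simp [hasseDeriv_zero']
    | succ k =>
      rw [Multiset.map_cons, Multiset.prod_cons, hasseDeriv_linear_mul, ih, ih,
        Multiset.powersetCard_cons, Multiset.map_add, Multiset.sum_add, Multiset.map_map]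
      congr 1
      · rw [← Multiset.sum_map_mul_left]
        congr 1
        apply Multiset.map_congr rfl
        intro t ht
        rw [Multiset.cons_sub_of_le _ (Multiset.mem_powersetCard.mp ht).1,
          Multiset.map_cons, Multiset.prod_cons]
      · apply congrArg
        apply Multiset.map_congr rfl
        intro t ht
        simp only [Function.comp_apply]
        rw [Multiset.sub_cons, Multiset.erase_cons_head]

theorem hasseDeriv_map' {S : Type*} [CommRing S] (φ : R →+* S) (k : ℕ) (f : R[X]) :
    (hasseDeriv k f).map φ = hasseDeriv k (f.map φ) := by
  ext n
  simp [hasseDeriv_coeff, coeff_map]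

theorem monic_hasseDeriv_natDegree {f : R[X]} (hf : f.Monic) :
    hasseDeriv f.natDegree f = 1 := by
  ext n
  rw [hasseDeriv_coeff]
  cases n with
  | zero => simp [hf.coeff_natDegree]
  | succ k =>
    rw [f.coeff_eq_zero_of_natDegree_lt (by omega)]
    simp [Polynomial.coeff_one]

theorem IsVal.neg_eq (hv : IsVal v) (x : R) : v (-x) = v x := by
  have h1 : v (-1 : R) + v (-1 : R) = 0 := by
    rw [← hv.1]; norm_num; exact hv.2.2.1
  have h2 : v (-1 : R) = 0 := by
    cases hWT : v (-1 : R) with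
    | top => rw [hWT] at h1; simp at h1
    | coe γ =>
      rw [hWT, ← WithTop.coe_add] at h1
      have h0 : γ + γ = 0 := by exact_mod_cast h1
      have hγ : γ = 0 := by
        rcases lt_trichotomy γ 0 with h | h | h
        · exact absurd h0 (ne_of_lt (add_neg h h))
        · exact h
        · exact absurd h0 (ne_of_gt (add_pos h h))
      rw [hγ, WithTop.coe_zero]
  calc v (-x) = v ((-1) * x) := by rw [neg_one_mul]
    _ = v (-1 : R) + v x := hv.1 _ _
    _ = v x := by rw [h2, zero_add]

theorem IsVal.add_eq (hv : IsVal v) {x y : R} (h : v x < v y) : v (x + y) = v x := by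
  refine le_antisymm ?_ (le_trans (le_of_eq (min_eq_left h.le).symm) (hv.2.1 x y))
  by_contra hc
  push_neg at hc
  have h3 : min (v (x + y)) (v (-y)) ≤ v (x + y + -y) := hv.2.1 _ _
  rw [hv.neg_eq, add_neg_cancel_right] at h3
  have : v x < min (v (x + y)) (v y) := lt_min hc h
  exact absurd h3 (not_le.mpr this)

theorem IsVal.le_sum (hv : IsVal v) {m : Multiset R} {c : WithTop Γ}
    (h : ∀ x ∈ m, c ≤ v x) : c ≤ v m.sum := by
  induction m using Multiset.induction with
  | empty => simp [hv.2.2.2]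
  | cons a s ih =>
    rw [Multiset.sum_cons]
    refine le_trans (le_min (h a (Multiset.mem_cons_self a s)) ?_) (hv.2.1 _ _)
    exact ih fun x hx => h x (Multiset.mem_cons_of_mem hx)

theorem IsVal.lt_sum (hv : IsVal v) {m : Multiset R} {c : WithTop Γ} (hc : c ≠ ⊤)
    (h : ∀ x ∈ m, c < v x) : c < v m.sum := by
  induction m using Multiset.induction with
  | empty => simp [hv.2.2.2]; exact lt_top_iff_ne_top.mpr hc
  | cons a s ih =>
    rw [Multiset.sum_cons]
    refine lt_of_lt_of_le (lt_min (h a (Multiset.mem_cons_self a s)) ?_) (hv.2.1 _ _)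
    exact ih fun x hx => h x (Multiset.mem_cons_of_mem hx)

theorem IsVal.lt_finset_sum (hv : IsVal v) {ι : Type*} {t : Finset ι} {g : ι → R}
    {c : WithTop Γ} (hc : c ≠ ⊤) (h : ∀ i ∈ t, c < v (g i)) :
    c < v (∑ i ∈ t, g i) := by
  show c < v (t.val.map g).sum
  apply hv.lt_sum hc
  intro x hx
  obtain ⟨i, hi, rfl⟩ := Multiset.mem_map.mp hx
  exact h i hi

theorem IsVal.prod_eq (hv : IsVal v) (m : Multiset R) :
    v m.prod = (m.map v).sum := by
  induction m using Multiset.induction with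
  | empty => simp [hv.2.2.1]
  | cons a s ih => rw [Multiset.prod_cons, hv.1, ih, Multiset.map_cons, Multiset.sum_cons]

theorem coe_multiset_sum {α : Type*} (g : α → Γ) (m : Multiset α) :
    (m.map fun a => ((g a : Γ) : WithTop Γ)).sum = ((m.map g).sum : Γ) := by
  induction m using Multiset.induction with
  | empty => simp
  | cons a s ih => simp [ih]

theorem multiset_exists_max_img {α β : Type*} [LinearOrder β] (g : α → β) {m : Multiset α}
    (hm : m ≠ 0) : ∃ a ∈ m, ∀ x ∈ m, g x ≤ g a := by
  induction m using Multiset.induction with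
  | empty => exact absurd rfl hm
  | cons a s ih =>
    rcases eq_or_ne s 0 with rfl | hs
    · exact ⟨a, Multiset.mem_cons_self a _, by simp⟩
    · obtain ⟨b, hb, hbmax⟩ := ih hs
      rcases le_total (g a) (g b) with h | h
      · exact ⟨b, Multiset.mem_cons_of_mem hb, by
          intro x hx; rcases Multiset.mem_cons.mp hx with rfl | hx
          · exact h
          · exact hbmax x hx⟩
      · exact ⟨a, Multiset.mem_cons_self a _, by
          intro x hx; rcases Multiset.mem_cons.mp hx with rfl | hx
          · exact le_rfl
          · exact le_trans (hbmax x hx) h⟩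

theorem multiset_sum_map_eq_top {α : Type*} (g : α → WithTop Γ) {m : Multiset α} {a : α}
    (ha : a ∈ m) (hga : g a = ⊤) : (m.map g).sum = ⊤ := by
  obtain ⟨m', rfl⟩ := Multiset.exists_cons_of_mem ha
  rw [Multiset.map_cons, Multiset.sum_cons, hga, top_add]

theorem multiset_sum_map_le {α : Type*} (g : α → Γ) {m : Multiset α} {d : Γ}
    (h : ∀ a ∈ m, g a ≤ d) : (m.map g).sum ≤ Multiset.card m • d := by
  induction m using Multiset.induction with
  | empty => simp
  | cons a s ih =>
    rw [Multiset.map_cons, Multiset.sum_cons, Multiset.card_cons, succ_nsmul']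
    exact add_le_add (h a (Multiset.mem_cons_self a s))
      (ih fun x hx => h x (Multiset.mem_cons_of_mem hx))

theorem multiset_sum_map_lt {α : Type*} (g : α → Γ) {m : Multiset α} {d : Γ}
    (hm : m ≠ 0) (h : ∀ a ∈ m, g a < d) : (m.map g).sum < Multiset.card m • d := by
  obtain ⟨a, ha⟩ := Multiset.exists_mem_of_ne_zero hm
  obtain ⟨m', rfl⟩ := Multiset.exists_cons_of_mem ha
  rw [Multiset.map_cons, Multiset.sum_cons, Multiset.card_cons, succ_nsmul']
  exact add_lt_add_of_lt_of_le (h a (Multiset.mem_cons_self a m'))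
    (multiset_sum_map_le g fun x hx => (h x (Multiset.mem_cons_of_mem hx)).le)

theorem inv_nsmul_smul_nsmul {Γ' : Type*} [AddCommGroup Γ'] [Module ℚ Γ'] {n : ℕ}
    (hn : n ≠ 0) (x : Γ') : (n : ℚ)⁻¹ • (n • x) = x := by
  rw [← Nat.cast_smul_eq_nsmul ℚ, smul_smul, inv_mul_cancel₀ (by exact_mod_cast hn), one_smul]

theorem inv_nsmul_le_of_le_nsmul {Γ' : Type*} [AddCommGroup Γ'] [LinearOrder Γ'] [IsOrderedAddMonoid Γ'] [Module ℚ Γ']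
    {x y : Γ'} {n : ℕ} (hn : n ≠ 0) (h : x ≤ n • y) : (n : ℚ)⁻¹ • x ≤ y := by
  by_contra hc
  push_neg at hc
  have h3 : (0:Γ') < (n : ℚ)⁻¹ • x - y := sub_pos.mpr hc
  have h4 := nsmul_pos h3 hn
  rw [nsmul_sub, sub_pos] at h4
  have h5 : n • ((n : ℚ)⁻¹ • x) = x := by
    rw [← Nat.cast_smul_eq_nsmul ℚ, smul_smul, mul_inv_cancel₀ (by exact_mod_cast hn), one_smul]
  rw [h5] at h4
  exact absurd (h.trans_lt h4) (lt_irrefl x)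

end Helpers

section EpsHelpers

variable {K : Type*} [Field K] {Γ : Type*} [AddCommGroup Γ] [LinearOrder Γ] [IsOrderedAddMonoid Γ] [Module ℚ Γ]

theorem epsAt_eq (v : K[X] → WithTop Γ) (f : K[X]) (b : ℕ) {e c : Γ}
    (he : v (hasseDeriv b f) = ↑e) (hcf : v f = ↑c) :
    epsAt v f b = ((((b : ℚ)⁻¹ • (c - e) : Γ) : WithTop Γ) : WithBot (WithTop Γ)) := by
  have hne : ¬ v (hasseDeriv b f) = ⊤ := by rw [he]; exact WithTop.coe_ne_top
  rw [epsAt, dif_neg hne, hcf, WithTop.map_coe]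
  have huntop : (v (hasseDeriv b f)).untop hne = e := by
    apply WithTop.coe_injective
    rw [WithTop.coe_untop, he]
  rw [huntop]

end EpsHelpers

/-- **Proposition 3.1 of [g]**: for every monic `f ∈ K[x]`,
`δ(f) = max{μ(x-a) : a a root of f in K̄}` equals `ε(f)`.
(In particular `δ(f)` does not depend on the chosen extension `μ` of `ν` to `K̄[x]`.) -/
theorem delta_eq_eps {K : Type*} [Field K] {Γ : Type*} [AddCommGroup Γ] [LinearOrder Γ] [IsOrderedAddMonoid Γ]
    [Module ℚ Γ]
    (v : K[X] → WithTop Γ) (hv : IsVal v)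
    (μ : (AlgebraicClosure K)[X] → WithTop Γ) (hμ : IsVal μ)
    (hext : ∀ f : K[X], μ (f.map (algebraMap K (AlgebraicClosure K))) = v f)
    (f : K[X]) (hf : f.Monic) :
    (((f.map (algebraMap K (AlgebraicClosure K))).roots.map
        fun a => ((μ (X - C a) : WithTop Γ) : WithBot (WithTop Γ))).sup)
      = eps v f := by
  classical
  set L := AlgebraicClosure K with hL
  set φ := algebraMap K L with hφ
  set F : L[X] := f.map φ with hFdef
  have hF : F.Monic := hf.map φ
  have hFsplits : Splits F := IsAlgClosed.splits F
  have hndeg : F.natDegree = f.natDegree := hf.natDegree_map φ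
  set s : Multiset L := F.roots with hsdef
  have hcard : Multiset.card s = f.natDegree := by
    rw [hsdef, ← hndeg]
    exact (Polynomial.splits_iff_card_roots.mp hFsplits)
  have hprod : F = (s.map fun a => X - C a).prod :=
    hFsplits.eq_prod_roots_of_monic hF
  have hvb : ∀ b, v (hasseDeriv b f) = μ (hasseDeriv b F) := fun b => by
    rw [← hext, hasseDeriv_map']
  have hvf : v f = μ F := (hext f).symm
  have hderiv : ∀ b, hasseDeriv b F =
      ((s.powersetCard b).map fun t => ((s - t).map fun a => (X:L[X]) - C a).prod).sum := by
    intro b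
    conv_lhs => rw [hprod]
    exact hasseDeriv_multiset_prod s b
  rcases Nat.eq_zero_or_pos f.natDegree with hn0 | hn1
  · have hs0 : s = 0 := Multiset.card_eq_zero.mp (by rw [hcard, hn0])
    rw [hs0, eps, hn0]
    simp
  · have hsne : s ≠ 0 := by
      intro h
      rw [h] at hcard
      simp at hcard
      omega
    obtain ⟨a₀, ha₀s, ha₀max⟩ := multiset_exists_max_img (fun a => μ (X - C a)) hsne
    have hLHS : (s.map fun a => ((μ (X - C a) : WithTop Γ) : WithBot (WithTop Γ))).sup
        = ((μ (X - C a₀) : WithTop Γ) : WithBot (WithTop Γ)) := by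
      apply le_antisymm
      · rw [Multiset.sup_le]
        intro x hx
        obtain ⟨a, ha, rfl⟩ := Multiset.mem_map.mp hx
        exact WithBot.coe_le_coe.mpr (ha₀max a ha)
      · exact Multiset.le_sup (Multiset.mem_map_of_mem _ ha₀s)
    rw [hLHS]
    cases hwa : μ (X - C a₀) with
    | top =>
      have hvftop : v f = ⊤ := by
        rw [hvf, hprod, hμ.prod_eq, Multiset.map_map]
        exact multiset_sum_map_eq_top _ ha₀s hwa
      have h1 : hasseDeriv f.natDegree f = 1 := monic_hasseDeriv_natDegree hf
      have hne : ¬ v (hasseDeriv f.natDegree f) = ⊤ := by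
        rw [h1, hv.2.2.1]
        simp
      have hepsn : epsAt v f f.natDegree = ((⊤ : WithTop Γ) : WithBot (WithTop Γ)) := by
        rw [epsAt, dif_neg hne, hvftop, WithTop.map_top]
      apply le_antisymm
      · refine le_trans (le_of_eq hepsn.symm) ?_
        exact Finset.le_sup (Finset.mem_Icc.mpr ⟨hn1, le_rfl⟩)
      · apply Finset.sup_le
        intro b _
        rw [epsAt]
        split_ifs with h
        · exact bot_le
        · exact WithBot.coe_le_coe.mpr le_top
    | coe d =>
      set g0 : L → Γ := fun a => (μ (X - C a)).untopD 0 with hg0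
      have hle : ∀ a ∈ s, μ (X - C a) ≤ ↑d := by
        intro a ha
        rw [← hwa]
        exact ha₀max a ha
      have hws : ∀ a ∈ s, μ (X - C a) = ↑(g0 a) := by
        intro a ha
        cases hx : μ (X - C a) with
        | top => exact absurd (hx.symm.trans_le (hle a ha)) (by simp)
        | coe γ => rw [hg0]; simp only [hx, WithTop.untopD_coe]
      have hgd : ∀ a ∈ s, g0 a ≤ d := by
        intro a ha
        have h1 := hle a ha
        rw [hws a ha] at h1
        exact_mod_cast h1
      have valprod : ∀ t : Multiset L, t ≤ s →
          μ ((t.map fun a => X - C a).prod) = (((t.map g0).sum : Γ) : WithTop Γ) := by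
        intro t ht
        rw [hμ.prod_eq, Multiset.map_map]
        have h1 : t.map ((fun p => μ p) ∘ fun a => X - C a)
            = t.map fun a => ((g0 a : Γ) : WithTop Γ) :=
          Multiset.map_congr rfl fun a ha => hws a (Multiset.mem_of_le ht ha)
        rw [h1, coe_multiset_sum]
      set c : Γ := (s.map g0).sum with hc
      have hvfc : v f = ↑c := by rw [hvf, hprod, valprod s le_rfl]
      have hdecomp : ∀ t ≤ s, c = ((s - t).map g0).sum + (t.map g0).sum := by
        intro t ht
        rw [hc]
        conv_lhs => rw [← tsub_add_cancel_of_le ht]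
        rw [Multiset.map_add, Multiset.sum_add]
      -- upper bound
      have hub : ∀ b ∈ Finset.Icc 1 f.natDegree,
          epsAt v f b ≤ (((d : WithTop Γ) : WithBot (WithTop Γ))) := by
        intro b hb
        obtain ⟨hb1, hbn⟩ := Finset.mem_Icc.mp hb
        have hlow : ((c - b • d : Γ) : WithTop Γ) ≤ v (hasseDeriv b f) := by
          rw [hvb b, hderiv b]
          apply hμ.le_sum
          intro x hx
          obtain ⟨t, ht, rfl⟩ := Multiset.mem_map.mp hx
          obtain ⟨hts, htc⟩ := Multiset.mem_powersetCard.mp ht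
          rw [valprod _ (tsub_le_self (a := s) (b := t)), WithTop.coe_le_coe]
          have h1 : (t.map g0).sum ≤ b • d := by
            have := multiset_sum_map_le g0 (m := t) (d := d)
              (fun a ha => hgd a (Multiset.mem_of_le hts ha))
            rwa [htc] at this
          have h2 := hdecomp t hts
          rw [sub_le_iff_le_add, h2]
          exact add_le_add_right h1 _
        cases he : v (hasseDeriv b f) with
        | top =>
          rw [epsAt, dif_pos he]
          exact bot_le
        | coe e =>
          rw [epsAt_eq v f b he hvfc]
          rw [WithBot.coe_le_coe, WithTop.coe_le_coe]
          rw [he, WithTop.coe_le_coe] at hlow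
          exact inv_nsmul_le_of_le_nsmul (by omega) (sub_le_comm.mp hlow)
      -- lower bound
      set t₀ : Multiset L := s.filter (fun a => μ (X - C a) = ↑d) with ht₀def
      have ht₀s : t₀ ≤ s := Multiset.filter_le _ s
      set b₀ := Multiset.card t₀ with hb₀
      have ha₀t₀ : a₀ ∈ t₀ := Multiset.mem_filter.mpr ⟨ha₀s, hwa⟩
      have hb₀1 : 1 ≤ b₀ := by
        rw [hb₀, Nat.succ_le_iff]
        exact Multiset.card_pos.mpr (fun h => by rw [h] at ha₀t₀; simp at ha₀t₀)
      have hb₀n : b₀ ≤ f.natDegree := by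
        rw [← hcard]
        exact Multiset.card_le_card ht₀s
      set s' : Multiset L := s - t₀ with hs'def
      have hs's : s' ≤ s := tsub_le_self
      have hss' : t₀ + s' = s := add_tsub_cancel_of_le ht₀s
      have ht₀d : ∀ a ∈ t₀, g0 a = d := by
        intro a ha
        have h1 := (Multiset.mem_filter.mp ha).2
        have h2 := hws a (Multiset.mem_of_le ht₀s ha)
        rw [h1] at h2
        exact_mod_cast h2.symm
      have hs'lt : ∀ a ∈ s', g0 a < d := by
        intro a ha
        have has : a ∈ s := Multiset.mem_of_le hs's ha
        refine lt_of_le_of_ne (hgd a has) ?_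
        intro he
        have hp : μ (X - C a) = (↑d : WithTop Γ) := by rw [hws a has, he]
        have hc1 : Multiset.count a s' = Multiset.count a s - Multiset.count a t₀ :=
          Multiset.count_sub a s t₀
        have hc2 : Multiset.count a t₀ = Multiset.count a s :=
          Multiset.count_filter_of_pos hp
        have h0 : Multiset.count a s' = 0 := by rw [hc1, hc2]; omega
        have := Multiset.count_pos.mpr ha
        omega
      set A : L[X] := (t₀.map fun a => X - C a).prod with hA
      set B : L[X] := (s'.map fun a => X - C a).prod with hB
      have hAB : F = A * B := by
        rw [hprod, ← hss', Multiset.map_add, Multiset.prod_add]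
      have hAmonic : A.Monic :=
        monic_multiset_prod_of_monic _ _ fun a _ => monic_X_sub_C a
      have hAdeg : A.natDegree = b₀ := by
        rw [hA, natDegree_multiset_prod_X_sub_C_eq_card, hb₀]
      have hDA : hasseDeriv b₀ A = 1 := by
        rw [← hAdeg]
        exact monic_hasseDeriv_natDegree hAmonic
      set c' : Γ := (s'.map g0).sum with hc'
      have hμB : μ B = ↑c' := valprod s' hs's
      have hcc' : c = b₀ • d + c' := by
        rw [hc, ← hss', Multiset.map_add, Multiset.sum_add, hc']
        congr 1
        rw [Multiset.map_congr rfl ht₀d, Multiset.map_const', Multiset.sum_replicate, hb₀]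
      have hdecompA : ∀ t ≤ t₀, (t₀.map g0).sum = ((t₀ - t).map g0).sum + (t.map g0).sum := by
        intro t ht
        conv_lhs => rw [← tsub_add_cancel_of_le ht]
        rw [Multiset.map_add, Multiset.sum_add]
      have hdecompB : ∀ t ≤ s', c' = ((s' - t).map g0).sum + (t.map g0).sum := by
        intro t ht
        rw [hc']
        conv_lhs => rw [← tsub_add_cancel_of_le ht]
        rw [Multiset.map_add, Multiset.sum_add]
      have hDAbound : ∀ i ≤ b₀, (((b₀ - i) • d : Γ) : WithTop Γ) ≤ μ (hasseDeriv i A) := by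
        intro i hi
        rw [hA, hasseDeriv_multiset_prod]
        apply hμ.le_sum
        intro x hx
        obtain ⟨u, hu, rfl⟩ := Multiset.mem_map.mp hx
        obtain ⟨hut₀, huc⟩ := Multiset.mem_powersetCard.mp hu
        rw [valprod _ ((tsub_le_self (a := t₀) (b := u)).trans ht₀s), WithTop.coe_le_coe]
        have h1 : ∀ a ∈ t₀ - u, g0 a = d := fun a ha => ht₀d a (Multiset.mem_of_le tsub_le_self ha)
        rw [Multiset.map_congr rfl h1, Multiset.map_const', Multiset.sum_replicate,
          Multiset.card_sub hut₀, huc, hb₀]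
      have hDBbound : ∀ j, 1 ≤ j → (((c' - j • d : Γ) : WithTop Γ)) < μ (hasseDeriv j B) := by
        intro j hj
        rw [hB, hasseDeriv_multiset_prod]
        apply hμ.lt_sum WithTop.coe_ne_top
        intro x hx
        obtain ⟨t, ht, rfl⟩ := Multiset.mem_map.mp hx
        obtain ⟨hts', htc⟩ := Multiset.mem_powersetCard.mp ht
        rw [valprod _ ((tsub_le_self (a := s') (b := t)).trans hs's), WithTop.coe_lt_coe]
        have htne : t ≠ 0 := by
          intro h
          rw [h] at htc
          simp at htc
          omega
        have h1 : (t.map g0).sum < j • d := by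
          have := multiset_sum_map_lt g0 htne
            (fun a ha => hs'lt a (Multiset.mem_of_le hts' ha))
          rwa [htc] at this
        rw [sub_lt_iff_lt_add, hdecompB t hts']
        exact add_lt_add_right h1 _
      have hDF : v (hasseDeriv b₀ f) = ↑c' := by
        rw [hvb b₀, hAB, hasseDeriv_mul]
        have hmem : (b₀, 0) ∈ Finset.HasAntidiagonal.antidiagonal b₀ := by
          rw [Finset.HasAntidiagonal.mem_antidiagonal]; simp
        rw [← Finset.add_sum_erase _ _ hmem]
        have hterm : hasseDeriv (b₀, 0).1 A * hasseDeriv (b₀, 0).2 B = B := by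
          dsimp only
          rw [hDA, hasseDeriv_zero', one_mul]
        rw [hterm]
        have hrest : μ B < μ (∑ ij ∈ (Finset.HasAntidiagonal.antidiagonal b₀).erase (b₀, 0),
            hasseDeriv ij.1 A * hasseDeriv ij.2 B) := by
          rw [hμB]
          apply hμ.lt_finset_sum WithTop.coe_ne_top
          intro ij hij
          obtain ⟨hijne, hijm⟩ := Finset.mem_erase.mp hij
          have hijsum : ij.1 + ij.2 = b₀ := Finset.HasAntidiagonal.mem_antidiagonal.mp hijm
          have hj1 : 1 ≤ ij.2 := by
            rcases Nat.eq_zero_or_pos ij.2 with h0 | h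
            · exfalso
              apply hijne
              have h1 : ij.1 = b₀ := by omega
              exact Prod.ext h1 h0
            · exact h
          have hi : ij.1 ≤ b₀ := by omega
          rw [hμ.1]
          have hkey : c' = (b₀ - ij.1) • d + (c' - ij.2 • d) := by
            have h2 : b₀ - ij.1 = ij.2 := by omega
            rw [h2]
            abel
          calc ((c' : Γ) : WithTop Γ) = ↑((b₀ - ij.1) • d + (c' - ij.2 • d)) := by rw [← hkey]
            _ = ((((b₀ - ij.1) • d : Γ) : WithTop Γ)) + ↑(c' - ij.2 • d) := WithTop.coe_add _ _
            _ < ((((b₀ - ij.1) • d : Γ) : WithTop Γ)) + μ (hasseDeriv ij.2 B) :=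
                WithTop.add_lt_add_left WithTop.coe_ne_top (hDBbound _ hj1)
            _ ≤ μ (hasseDeriv ij.1 A) + μ (hasseDeriv ij.2 B) :=
                add_le_add_left (hDAbound _ hi) _
        rw [hμ.add_eq hrest, hμB]
      have hepsb₀ : epsAt v f b₀ = (((d : WithTop Γ) : WithBot (WithTop Γ))) := by
        rw [epsAt_eq v f b₀ hDF hvfc]
        have h1 : c - c' = b₀ • d := by rw [hcc']; abel
        rw [h1, inv_nsmul_smul_nsmul (by omega)]
      have heps_ge : (((d : WithTop Γ) : WithBot (WithTop Γ))) ≤ eps v f := by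
        rw [← hepsb₀]
        exact Finset.le_sup (Finset.mem_Icc.mpr ⟨hb₀1, hb₀n⟩)
      exact (le_antisymm (Finset.sup_le hub) heps_ge).symm
end

section
/- Let (K,ν) be a valued field and {a_ρ}_{ρ<λ} a pseudo-convergent sequence in K. Then for every polynomial f(x) ∈ K[x] there exists ρ_f < λ such that either (1) ν(f(a_σ)) = ν(f(a_{ρ_f})) for every σ with ρ_f ≤ σ < λ, or (2) ν(f(a_σ)) > ν(f(a_ρ)) for every ρ, σ with ρ_f ≤ ρ < σ < λ. -/
open Polynomial

set_option linter.unusedSectionVars false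

open Polynomial

section AuxDich

variable {L : Type*} [Field L] {Γ₀ : Type*} [LinearOrderedCommGroupWithZero Γ₀]
  {ι : Type*} [LinearOrder ι] [NoMaxOrder ι] [Nonempty ι]

/-- eventually constant (with nonzero value) -/
def MyEvC (δ : ι → Γ₀) : Prop := ∃ ρ0, δ ρ0 ≠ 0 ∧ ∀ σ, ρ0 ≤ σ → δ σ = δ ρ0

/-- eventually strictly decreasing -/
def MyEvD (δ : ι → Γ₀) : Prop := ∃ ρ0, ∀ ρ σ, ρ0 ≤ ρ → ρ < σ → δ σ < δ ρ

lemma my_mul_lt {a b c : Γ₀} (hc : c ≠ 0) (h : a < b) : c * a < c * b :=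
  lt_of_le_of_ne (mul_le_mul_right h.le c) fun e => h.ne (mul_left_cancel₀ hc e)

lemma myEvD_ne_zero {δ : ι → Γ₀} {ρ0 ρ : ι} (h : ∀ ρ σ, ρ0 ≤ ρ → ρ < σ → δ σ < δ ρ)
    (hρ : ρ0 ≤ ρ) : δ ρ ≠ 0 := by
  obtain ⟨σ, hσ⟩ := exists_gt ρ
  exact (zero_le'.trans_lt (h ρ σ hρ hσ)).ne'

lemma myEv_mul {δ1 δ2 : ι → Γ₀} (h1 : MyEvC δ1 ∨ MyEvD δ1) (h2 : MyEvC δ2 ∨ MyEvD δ2) :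
    MyEvC (fun ρ => δ1 ρ * δ2 ρ) ∨ MyEvD (fun ρ => δ1 ρ * δ2 ρ) := by
  rcases h1 with ⟨ρ1, hn1, hc1⟩ | ⟨ρ1, hd1⟩ <;> rcases h2 with ⟨ρ2, hn2, hc2⟩ | ⟨ρ2, hd2⟩
  · left
    refine ⟨max ρ1 ρ2, ?_, ?_⟩
    · dsimp only
      rw [hc1 _ (le_max_left _ _), hc2 _ (le_max_right _ _)]
      exact mul_ne_zero hn1 hn2
    · intro σ hσ
      dsimp only
      rw [hc1 _ ((le_max_left ρ1 ρ2).trans hσ), hc2 _ ((le_max_right ρ1 ρ2).trans hσ),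
        hc1 _ (le_max_left _ _), hc2 _ (le_max_right _ _)]
  · right
    refine ⟨max ρ1 ρ2, fun ρ σ hρ hρσ => ?_⟩
    dsimp only
    rw [hc1 _ (((le_max_left ρ1 ρ2).trans hρ).trans hρσ.le), hc1 _ ((le_max_left ρ1 ρ2).trans hρ)]
    exact my_mul_lt hn1 (hd2 ρ σ ((le_max_right ρ1 ρ2).trans hρ) hρσ)
  · right
    refine ⟨max ρ1 ρ2, fun ρ σ hρ hρσ => ?_⟩
    dsimp only
    rw [hc2 _ (((le_max_right ρ1 ρ2).trans hρ).trans hρσ.le), hc2 _ ((le_max_right ρ1 ρ2).trans hρ),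
      mul_comm (δ1 σ), mul_comm (δ1 ρ)]
    exact my_mul_lt hn2 (hd1 ρ σ ((le_max_left ρ1 ρ2).trans hρ) hρσ)
  · right
    refine ⟨max ρ1 ρ2, fun ρ σ hρ hρσ => ?_⟩
    have hρ1 : ρ1 ≤ ρ := (le_max_left ρ1 ρ2).trans hρ
    have hρ2 : ρ2 ≤ ρ := (le_max_right ρ1 ρ2).trans hρ
    have hne1 : δ1 ρ ≠ 0 := myEvD_ne_zero hd1 hρ1
    have hne2 : δ2 ρ ≠ 0 := myEvD_ne_zero hd2 hρ2
    dsimp only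
    rcases eq_or_ne (δ1 σ) 0 with he | he
    · rw [he, zero_mul]
      exact zero_lt_iff.mpr (mul_ne_zero hne1 hne2)
    · calc δ1 σ * δ2 σ < δ1 σ * δ2 ρ := my_mul_lt he (hd2 ρ σ hρ2 hρσ)
        _ ≤ δ1 ρ * δ2 ρ := mul_le_mul_left (hd1 ρ σ hρ1 hρσ).le _

variable (w : Valuation L Γ₀) (A : ι → L)

lemma my_wdiff_indep (hp : ∀ ρ σ τ : ι, ρ < σ → σ < τ → w (A τ - A σ) < w (A σ - A ρ))
    {ρ σ σ' : ι} (h1 : ρ < σ) (h2 : σ < σ') : w (A σ' - A ρ) = w (A σ - A ρ) := by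
  have he : A σ' - A ρ = (A σ' - A σ) + (A σ - A ρ) := by ring
  rw [he, Valuation.map_add_eq_of_lt_right _ (hp ρ σ σ' h1 h2)]

lemma my_factor_dichotomy (hp : ∀ ρ σ τ : ι, ρ < σ → σ < τ → w (A τ - A σ) < w (A σ - A ρ))
    (b : L) : MyEvC (fun ρ => w (A ρ - b)) ∨ MyEvD (fun ρ => w (A ρ - b)) := by
  by_cases h : ∃ ρ0 σ0, ρ0 < σ0 ∧ w (A σ0 - A ρ0) < w (A ρ0 - b)
  · obtain ⟨ρ0, σ0, h01, hlt⟩ := h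
    left
    refine ⟨ρ0, (zero_le'.trans_lt hlt).ne', fun σ hσ => ?_⟩
    rcases eq_or_lt_of_le hσ with rfl | hσ
    · rfl
    have hw : w (A σ - A ρ0) = w (A σ0 - A ρ0) := by
      rcases lt_trichotomy σ σ0 with hc | rfl | hc
      · exact (my_wdiff_indep w A hp hσ hc).symm
      · rfl
      · exact my_wdiff_indep w A hp h01 hc
    have he : A σ - b = (A σ - A ρ0) + (A ρ0 - b) := by ring
    dsimp only
    rw [he, Valuation.map_add_eq_of_lt_right _ (by rw [hw]; exact hlt)]
  · push_neg at h
    right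
    have key : ∀ ρ σ : ι, ρ < σ → w (A ρ - b) = w (A σ - A ρ) := by
      intro ρ σ hρσ
      rcases eq_or_lt_of_le (h ρ σ hρσ) with he | hlt
      · exact he
      · exfalso
        obtain ⟨τ, hτ⟩ := exists_gt σ
        have h1 : w (A σ - b) = w (A σ - A ρ) := by
          have he2 : A σ - b = (A σ - A ρ) + (A ρ - b) := by ring
          rw [he2, Valuation.map_add_eq_of_lt_left _ hlt]
        have h2 : w (A σ - b) ≤ w (A τ - A σ) := h σ τ hτ
        rw [h1] at h2
        exact absurd h2 (not_le.mpr (hp ρ σ τ hρσ hτ))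
    refine ⟨Classical.arbitrary ι, fun ρ σ _ hρσ => ?_⟩
    obtain ⟨τ, hτ⟩ := exists_gt σ
    dsimp only
    rw [key ρ σ hρσ, key σ τ hτ]
    exact hp ρ σ τ hρσ hτ

lemma my_multiset_dichotomy (hp : ∀ ρ σ τ : ι, ρ < σ → σ < τ → w (A τ - A σ) < w (A σ - A ρ))
    (s : Multiset L) : MyEvC (fun ρ => (s.map fun b => w (A ρ - b)).prod) ∨
      MyEvD (fun ρ => (s.map fun b => w (A ρ - b)).prod) := by
  induction s using Multiset.induction_on with
  | empty => exact Or.inl ⟨Classical.arbitrary ι, by simp, fun σ _ => by simp⟩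
  | cons a s ih =>
    have hfun : (fun ρ => (((a ::ₘ s).map fun b => w (A ρ - b)).prod : Γ₀)) =
        fun ρ => w (A ρ - a) * ((s.map fun b => w (A ρ - b)).prod : Γ₀) := by
      funext ρ; simp
    rw [hfun]
    exact myEv_mul (my_factor_dichotomy w A hp a) ih

lemma my_poly_dichotomy [IsAlgClosed L]
    (hp : ∀ ρ σ τ : ι, ρ < σ → σ < τ → w (A τ - A σ) < w (A σ - A ρ)) (g : L[X]) :
    ∃ ρf : ι, (∀ σ, ρf ≤ σ → w (g.eval (A σ)) = w (g.eval (A ρf))) ∨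
      (∀ ρ σ, ρf ≤ ρ → ρ < σ → w (g.eval (A σ)) < w (g.eval (A ρ))) := by
  by_cases hg : g = 0
  · exact ⟨Classical.arbitrary ι, Or.inl fun σ _ => by simp [hg]⟩
  have hsplit := (IsAlgClosed.splits g).eq_prod_roots
  have heval : ∀ x : L, w (g.eval x) =
      w g.leadingCoeff * ((g.roots.map fun b => w (x - b)).prod : Γ₀) := by
    intro x
    conv_lhs => rw [hsplit]
    rw [eval_mul, eval_C, map_mul, eval_multiset_prod, map_multiset_prod]
    congr 2
    rw [Multiset.map_map, Multiset.map_map]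
    congr 1
    funext b
    simp
  have hC : MyEvC (ι := ι) (fun _ => w g.leadingCoeff) :=
    ⟨Classical.arbitrary ι, by simp [Valuation.ne_zero_iff, hg], fun _ _ => rfl⟩
  rcases myEv_mul (Or.inl hC) (my_multiset_dichotomy w A hp g.roots) with h | h
  · obtain ⟨ρ0, _, hconst⟩ := h
    exact ⟨ρ0, Or.inl fun σ hσ => by rw [heval, heval]; exact hconst σ hσ⟩
  · obtain ⟨ρ0, hdec⟩ := h
    exact ⟨ρ0, Or.inr fun ρ σ h1 h2 => by rw [heval, heval]; exact hdec ρ σ h1 h2⟩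

end AuxDich


/-- **Dichotomy for pseudo-convergent sequences** (Kaplansky): for every polynomial
`f ∈ K[x]` and every pseudo-convergent sequence `{a_ρ}_{ρ<λ}` in a valued field
`(K,ν)`, there exists `ρ_f < λ` such that either `ν(f(a_σ))` is constant for
`σ ≥ ρ_f`, or `ν(f(a_σ))` is strictly increasing for `σ ≥ ρ_f`. -/
theorem pcs_dichotomy {K : Type*} [Field K] {Γ : Type*} [AddCommGroup Γ] [LinearOrder Γ] [IsOrderedAddMonoid Γ]
    {ι : Type*} [LinearOrder ι] [WellFoundedLT ι] [NoMaxOrder ι] [Nonempty ι]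
    (v : K → WithTop Γ) (hv : IsVal v) (hvf : ∀ c : K, v c = ⊤ ↔ c = 0)
    (a : ι → K)
    (hpcs : ∀ ρ σ τ : ι, ρ < σ → σ < τ → v (a σ - a ρ) < v (a τ - a σ)) :
    ∀ f : K[X], ∃ ρf : ι,
      (∀ σ : ι, ρf ≤ σ → v (f.eval (a σ)) = v (f.eval (a ρf))) ∨
      (∀ ρ σ : ι, ρf ≤ ρ → ρ < σ → v (f.eval (a ρ)) < v (f.eval (a σ))) := by
  obtain ⟨hmul, hadd, hone, hzero⟩ := hv
  have hneg1 : v (-1) = 0 := by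
    have h2 : v (-1) + v (-1) = 0 := by
      rw [← hmul]; norm_num; exact hone
    rcases lt_trichotomy (v (-1)) 0 with h | h | h
    · have hle : v (-1) + v (-1) ≤ v (-1) + 0 := add_le_add_right h.le _
      rw [h2, add_zero] at hle
      exact absurd (hle.trans_lt h) (lt_irrefl 0)
    · exact h
    · have hle : 0 + v (-1) ≤ v (-1) + v (-1) := add_le_add_left h.le _
      rw [h2, zero_add] at hle
      exact absurd (h.trans_le hle) (lt_irrefl 0)
  have hvneg : ∀ x : K, v (-x) = v x := fun x => by
    rw [← neg_one_mul, hmul, hneg1, zero_add]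
  set L := AlgebraicClosure K with hL
  set i : K →+* L := algebraMap K L with hi
  have hinj : Function.Injective i := i.injective
  set O : ValuationSubring K :=
    { carrier := {x | 0 ≤ v x}
      mul_mem' := fun {x y} hx hy => by
        show 0 ≤ v (x * y); rw [hmul]; exact add_nonneg hx hy
      one_mem' := by show (0 : WithTop Γ) ≤ v 1; rw [hone]
      add_mem' := fun {x y} hx hy => le_trans (le_min hx hy) (hadd x y)
      zero_mem' := by show (0 : WithTop Γ) ≤ v 0; rw [hzero]; exact le_top
      neg_mem' := fun {x} hx => by show 0 ≤ v (-x); rw [hvneg]; exact hx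
      mem_or_inv_mem' := by
        intro x
        by_cases hx : x = 0
        · left; show 0 ≤ v x; rw [hx, hzero]; exact le_top
        · have hxi : v x + v x⁻¹ = 0 := by
            rw [← hmul, mul_inv_cancel₀ hx, hone]
          rcases le_or_gt 0 (v x) with h | h
          · exact Or.inl h
          · right
            show 0 ≤ v x⁻¹
            by_contra hinv
            push_neg at hinv
            have : v x + v x⁻¹ ≤ v x + 0 := add_le_add_right hinv.le _
            rw [hxi, add_zero] at this
            exact absurd (this.trans_lt h) (lt_irrefl 0) } with hO
  obtain ⟨W, hWle, hWloc⟩ := (LocalSubring.map i O.toLocalSubring).exists_le_valuationSubring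
  have hmemA : ∀ x : K, 0 ≤ v x → i x ∈ (LocalSubring.map i O.toLocalSubring).toSubring :=
    fun x hx => ⟨x, hx, rfl⟩
  have hkey : ∀ x : K, i x ∈ W ↔ 0 ≤ v x := by
    intro x
    constructor
    · intro hx
      by_contra hvx
      have hx0 : x ≠ 0 := fun e => hvx (by rw [e, hzero]; exact le_top)
      have hxi : v x + v x⁻¹ = 0 := by rw [← hmul, mul_inv_cancel₀ hx0, hone]
      have hxinv : 0 ≤ v x⁻¹ := by
        push_neg at hvx
        by_contra hinv
        push_neg at hinv
        have : v x + v x⁻¹ ≤ v x + 0 := add_le_add_right hinv.le _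
        rw [hxi, add_zero] at this
        exact absurd (this.trans_lt hvx) (lt_irrefl 0)
      have hmem : i x⁻¹ ∈ (LocalSubring.map i O.toLocalSubring).toSubring := hmemA _ hxinv
      have hu : IsUnit (Subring.inclusion hWle ⟨i x⁻¹, hmem⟩) := by
        refine isUnit_iff_exists_inv.mpr ⟨⟨i x, hx⟩, ?_⟩
        ext
        show i x⁻¹ * i x = 1
        rw [← map_mul, inv_mul_cancel₀ hx0, map_one]
      have hu2 := hWloc.map_nonunit _ hu
      obtain ⟨z, hz⟩ := isUnit_iff_exists_inv.mp hu2
      have hz1 : (i x⁻¹) * z.1 = 1 := congr_arg Subtype.val hz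
      obtain ⟨y, hy, hyz⟩ := z.2
      have hiy : i (x⁻¹ * y) = 1 := by rw [map_mul, hyz]; exact hz1
      have hxy : x⁻¹ * y = 1 := hinj (by rw [hiy, map_one])
      have hyx : y = x := by
        field_simp at hxy
        exact hxy
      exact hvx (hyx ▸ hy)
    · intro hx; exact hWle (hmemA x hx)
  set w := W.valuation with hwdef
  have hcomp_le : ∀ x y : K, v x ≤ v y ↔ w (i y) ≤ w (i x) := by
    intro x y
    by_cases hy : y = 0
    · subst hy
      simp only [hzero, le_top, map_zero, true_iff]
      exact zero_le'
    by_cases hx : x = 0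
    · subst hx
      constructor
      · intro h
        rw [hzero, top_le_iff] at h
        exact absurd ((hvf y).mp h) hy
      · intro h
        rw [map_zero, map_zero, le_zero_iff] at h
        rw [Valuation.zero_iff] at h
        exact absurd (hinj (by rw [h, map_zero])) hy
    · have hxinv_ne : v x⁻¹ ≠ ⊤ := fun e => (inv_ne_zero hx) ((hvf _).mp e)
      have hxi : v x + v x⁻¹ = 0 := by rw [← hmul, mul_inv_cancel₀ hx, hone]
      have step1 : v x ≤ v y ↔ 0 ≤ v (y * x⁻¹) := by
        rw [hmul, ← hxi]
        exact (WithTop.add_le_add_iff_right hxinv_ne).symm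
      have hwx : w (i x) ≠ 0 := by
        rw [Valuation.ne_zero_iff]
        exact fun e => hx (hinj (by rw [e, map_zero]))
      rw [step1, ← hkey, ← ValuationSubring.valuation_le_one_iff]
      rw [map_mul, map_inv₀, map_mul, map_inv₀, ← div_eq_mul_inv]
      exact div_le_one₀ (zero_lt_iff.mpr hwx)
  have hcomp_eq : ∀ x y : K, v x = v y ↔ w (i y) = w (i x) := fun x y => by
    rw [le_antisymm_iff, le_antisymm_iff, hcomp_le, hcomp_le]
  have hcomp_lt : ∀ x y : K, v x < v y ↔ w (i y) < w (i x) := fun x y => by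
    rw [lt_iff_le_not_ge, lt_iff_le_not_ge, hcomp_le, hcomp_le]
  have hpw : ∀ ρ σ τ : ι, ρ < σ → σ < τ →
      w (i (a τ) - i (a σ)) < w (i (a σ) - i (a ρ)) := by
    intro ρ σ τ h1 h2
    rw [← map_sub, ← map_sub]
    exact (hcomp_lt _ _).mp (hpcs ρ σ τ h1 h2)
  intro f
  obtain ⟨ρf, hd⟩ := my_poly_dichotomy w (fun ρ => i (a ρ)) hpw (f.map i)
  have hev : ∀ x : K, (f.map i).eval (i x) = i (f.eval x) := fun x => by
    rw [Polynomial.eval_map, Polynomial.eval₂_at_apply]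
  refine ⟨ρf, ?_⟩
  rcases hd with h | h
  · left
    intro σ hσ
    refine (hcomp_eq _ _).mpr ?_
    rw [← hev, ← hev]
    exact (h σ hσ).symm
  · right
    intro ρ σ h1 h2
    refine (hcomp_lt _ _).mpr ?_
    rw [← hev, ← hev]
    exact h ρ σ h1 h2
end

section
/- Let (K,ν) be a valued field, {a_ρ}_{ρ<λ} a pseudo-convergent sequence of algebraic type in K without a limit in K, q(x) a polynomial of smallest degree for which the values ν(q(a_ρ)) are eventually strictly increasing, and z a root of q(x). Then there exists an immediate algebraic extension of ν to K(z) defined as follows: for every polynomial f(x) ∈ K[x] with deg f < deg q, ν(f(z)) is set to be the eventually constant value ν(f(a_ρ)) for large ρ. Moreover, if u is a root of q(x) and μ is an extension of ν to K(u) making u a limit of {a_ρ}_{ρ<λ}, then there exists a value-preserving K-isomorphism from K(u) to K(z) taking u to z. -/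
open Polynomial

open Filter

section Helpers

variable {R : Type*} [CommRing R] {Γ : Type*} [AddCommGroup Γ] [LinearOrder Γ] [IsOrderedAddMonoid Γ]
  {w : R → WithTop Γ}

theorem IsVal.map_neg (hw : IsVal w) (x : R) : w (-x) = w x := by
  have h1 : w (-1 : R) = 0 := by
    have h2 : w ((-1 : R) * (-1)) = w (-1) + w (-1) := hw.1 _ _
    rw [neg_one_mul, neg_neg, hw.2.2.1] at h2
    cases e : w (-1 : R) with
    | top => rw [e] at h2; simp at h2
    | coe t =>
      rw [e, ← WithTop.coe_add] at h2
      have h3 : t + t = 0 := by exact_mod_cast h2.symm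
      have h4 : t = 0 := by
        rcases lt_trichotomy t 0 with h | h | h
        · exact absurd h3 (ne_of_lt (add_neg h h))
        · exact h
        · exact absurd h3 (ne_of_gt (add_pos h h))
      exact_mod_cast h4
  have : w (-x) = w ((-1) * x) := by rw [neg_one_mul]
  rw [this, hw.1, h1, zero_add]

theorem IsVal.add_eq_left (hw : IsVal w) {x y : R} (h : w x < w y) :
    w (x + y) = w x := by
  have hle : w x ≤ w (x + y) := by
    have := hw.2.1 x y
    rwa [min_eq_left h.le] at this
  refine le_antisymm ?_ hle
  by_contra h'
  push_neg at h'
  have h2 := hw.2.1 (x + y) (-y)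
  rw [hw.map_neg, add_neg_cancel_right] at h2
  exact absurd (lt_min h' h) (not_lt.mpr h2)

theorem IsVal.sub_eq_min (hw : IsVal w) {x y : R} (h : w x ≠ w y) :
    w (x - y) = min (w x) (w y) := by
  rcases h.lt_or_gt with hlt | hlt
  · rw [min_eq_left hlt.le, sub_eq_add_neg]
    exact hw.add_eq_left (by rwa [hw.map_neg])
  · rw [min_eq_right hlt.le]
    have : x - y = -(y + -x) := by ring
    rw [this, hw.map_neg]
    exact hw.add_eq_left (by rwa [hw.map_neg])

theorem IsVal.map_pow (hw : IsVal w) {y : R} {γ : Γ} (h : w y = ↑γ) (i : ℕ) :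
    w (y ^ i) = ↑(i • γ) := by
  induction i with
  | zero => simpa using hw.2.2.1
  | succ n ih =>
    rw [pow_succ, hw.1, ih, h, succ_nsmul, WithTop.coe_add]

theorem IsVal.sum_eq (hw : IsVal w) {α : Type*} {s : Finset α} {t : α → R} {i0 : α}
    (h0 : i0 ∈ s) (hne : w (t i0) ≠ ⊤)
    (h : ∀ i ∈ s, i ≠ i0 → w (t i0) < w (t i)) :
    w (∑ i ∈ s, t i) = w (t i0) := by
  have key : ∀ s' : Finset α, (∀ i ∈ s', w (t i0) < w (t i)) →
      w (t i0) < w (∑ i ∈ s', t i) := by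
    intro s'
    induction s' using Finset.cons_induction with
    | empty => intro _; rw [Finset.sum_empty, hw.2.2.2]; exact hne.lt_top
    | cons b s'' hb ih =>
      intro hs
      rw [Finset.sum_cons]
      refine lt_of_lt_of_le (lt_min (hs b (Finset.mem_cons_self _ _)) ?_) (hw.2.1 _ _)
      exact ih fun i hi => hs i (Finset.mem_cons_of_mem hi)
  classical
  rw [← Finset.add_sum_erase s t h0]
  exact hw.add_eq_left (key (s.erase i0) fun i hi =>
    h i (Finset.mem_of_mem_erase hi) (Finset.ne_of_mem_erase hi))

theorem taylor_aeval {K : Type*} [Field K] {A : Type*} [CommRing A] [Algebra K A]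
    (b : A) (c : K) (f : K[X]) :
    aeval b f = ∑ i ∈ Finset.range (f.natDegree + 1),
      ((hasseDeriv i f).eval c) • (b - algebraMap K A c) ^ i := by
  have hcomp : f = (taylor c f).comp (X - C c) := by
    rw [taylor_apply, comp_assoc]
    simp
  conv_lhs => rw [hcomp]
  rw [aeval_comp]
  have : (aeval b) (X - C c) = b - algebraMap K A c := by simp
  rw [this, aeval_eq_sum_range' (n := f.natDegree + 1)
    (by rw [natDegree_taylor]; omega)]
  refine Finset.sum_congr rfl fun i _ => by rw [taylor_coeff]

end Helpers

theorem key_eval {K : Type*} [Field K] {Γ : Type*} [AddCommGroup Γ] [LinearOrder Γ] [IsOrderedAddMonoid Γ]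
    (v : K → WithTop Γ)
    {A : Type*} [CommRing A] [Algebra K A] (w' : A → WithTop Γ) (hw' : IsVal w')
    (hext : ∀ c : K, w' (algebraMap K A c) = v c)
    (f : K[X]) (d : ℕ) (hfd : f.natDegree = d)
    (c : K) (b : A) (g : Γ) (hb : w' (b - algebraMap K A c) = ↑g)
    (i0 : ℕ) (hi0 : i0 ∈ Finset.Icc 1 d) (G : Γ)
    (hG : v ((Polynomial.hasseDeriv i0 f).eval c) + ↑(i0 • g) = ↑G)
    (hmin : ∀ i ∈ Finset.Icc 1 d, i ≠ i0 →
      (↑G : WithTop Γ) < v ((Polynomial.hasseDeriv i f).eval c) + ↑(i • g)) :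
    w' (Polynomial.aeval b f - algebraMap K A (f.eval c)) = ↑G := by
  classical
  have htay := taylor_aeval b c f
  rw [hfd] at htay
  have hsplit : Finset.range (d + 1) = insert 0 (Finset.Icc 1 d) := by
    ext x
    simp only [Finset.mem_range, Finset.mem_insert, Finset.mem_Icc]
    omega
  rw [hsplit, Finset.sum_insert (by simp)] at htay
  have h0term : ((Polynomial.hasseDeriv 0 f).eval c) • (b - algebraMap K A c) ^ 0
      = algebraMap K A (f.eval c) := by
    rw [Polynomial.hasseDeriv_zero', pow_zero, Algebra.smul_def, mul_one]
  rw [h0term] at htay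
  have hdiff : Polynomial.aeval b f - algebraMap K A (f.eval c) =
      ∑ i ∈ Finset.Icc 1 d,
        ((Polynomial.hasseDeriv i f).eval c) • (b - algebraMap K A c) ^ i := by
    rw [htay, add_sub_cancel_left]
  rw [hdiff]
  have hterm : ∀ i ∈ Finset.Icc 1 d,
      w' (((Polynomial.hasseDeriv i f).eval c) • (b - algebraMap K A c) ^ i) =
        v ((Polynomial.hasseDeriv i f).eval c) + ↑(i • g) := by
    intro i _
    rw [Algebra.smul_def, hw'.1, hext, hw'.map_pow hb]
  rw [hw'.sum_eq hi0 (by rw [hterm i0 hi0, hG]; exact WithTop.coe_ne_top)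
    (fun i hi hne => by rw [hterm i hi, hterm i0 hi0, hG]; exact hmin i hi hne),
    hterm i0 hi0, hG]

theorem fix_lemma {K : Type*} [Field K] {Γ : Type*} [AddCommGroup Γ] [LinearOrder Γ] [IsOrderedAddMonoid Γ]
    {ι : Type*} [LinearOrder ι] [NoMaxOrder ι] [Nonempty ι]
    (v : K → WithTop Γ) (hv : IsVal v) (hvf : ∀ c : K, v c = ⊤ ↔ c = 0)
    (a : ι → K)
    (hpcs : ∀ ρ σ τ : ι, ρ < σ → σ < τ → v (a σ - a ρ) < v (a τ - a σ))
    (q : K[X])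
    (hqmin : ∀ f : K[X],
      (∃ ρ0 : ι, ∀ ρ σ : ι, ρ0 ≤ ρ → ρ < σ → v (f.eval (a ρ)) < v (f.eval (a σ))) →
      q.degree ≤ f.degree)
    (f : K[X]) (hdeg : f.degree < q.degree) :
    ∃ γ : WithTop Γ, (∀ᶠ σ in atTop, v (f.eval (a σ)) = γ) ∧
      (0 < f.degree → ∃ (ρ1 : ι) (δ : Γ), γ < ↑δ ∧ v (f.eval (a ρ1)) = γ ∧
        (∀ σ : ι, ρ1 < σ → v (f.eval (a σ) - f.eval (a ρ1)) = ↑δ) ∧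
        (∃ i0 ∈ Finset.Icc 1 f.natDegree, ∃ g0 : Γ,
          (∀ σ : ι, ρ1 < σ → v (a σ - a ρ1) = ↑g0) ∧
          v ((Polynomial.hasseDeriv i0 f).eval (a ρ1)) + ↑(i0 • g0) = (↑δ : WithTop Γ) ∧
          ∀ i ∈ Finset.Icc 1 f.natDegree, i ≠ i0 →
            (↑δ : WithTop Γ) < v ((Polynomial.hasseDeriv i f).eval (a ρ1)) + ↑(i • g0))) := by
  classical
  -- preliminary: the gauge γ'
  have hane : ∀ ρ σ : ι, ρ < σ → v (a σ - a ρ) ≠ ⊤ := by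
    intro ρ σ h
    obtain ⟨τ, hτ⟩ := exists_gt σ
    exact (hpcs ρ σ τ h hτ).ne_top
  have hγ : ∀ ρ : ι, ∃ g : Γ, ∀ σ, ρ < σ → v (a σ - a ρ) = ↑g := by
    intro ρ
    obtain ⟨σ0, hσ0⟩ := exists_gt ρ
    obtain ⟨g, hg⟩ := WithTop.ne_top_iff_exists.mp (hane ρ σ0 hσ0)
    refine ⟨g, fun σ hσ => ?_⟩
    rcases lt_trichotomy σ σ0 with h | h | h
    · have h1 := hpcs ρ σ σ0 hσ h
      have h2 : a σ0 - a ρ = (a σ - a ρ) + (a σ0 - a σ) := by ring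
      have h3 : v (a σ0 - a ρ) = v (a σ - a ρ) := by
        rw [h2]; exact hv.add_eq_left h1
      rw [← h3, ← hg]
    · rw [h, ← hg]
    · have h1 := hpcs ρ σ0 σ hσ0 h
      have h2 : a σ - a ρ = (a σ0 - a ρ) + (a σ - a σ0) := by ring
      rw [h2, hv.add_eq_left h1, ← hg]
  choose γ' hγ' using hγ
  have hγmono : StrictMono γ' := by
    intro ρ σ h
    obtain ⟨τ, hτ⟩ := exists_gt σ
    have h1 := hpcs ρ σ τ h hτ
    rw [hγ' ρ σ h, hγ' σ τ hτ] at h1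
    exact_mod_cast h1
  -- strong induction on the natural degree
  suffices H : ∀ d : ℕ, ∀ f : K[X], f.natDegree = d → f.degree < q.degree →
      (∃ γ : WithTop Γ, (∀ᶠ σ in atTop, v (f.eval (a σ)) = γ) ∧
      (0 < f.degree → ∃ (ρ1 : ι) (δ : Γ), γ < ↑δ ∧ v (f.eval (a ρ1)) = γ ∧
        (∀ σ : ι, ρ1 < σ → v (f.eval (a σ) - f.eval (a ρ1)) = ↑δ) ∧
        (∃ i0 ∈ Finset.Icc 1 f.natDegree, ∃ g0 : Γ,
          (∀ σ : ι, ρ1 < σ → v (a σ - a ρ1) = ↑g0) ∧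
          v ((Polynomial.hasseDeriv i0 f).eval (a ρ1)) + ↑(i0 • g0) = (↑δ : WithTop Γ) ∧
          ∀ i ∈ Finset.Icc 1 f.natDegree, i ≠ i0 →
            (↑δ : WithTop Γ) < v ((Polynomial.hasseDeriv i f).eval (a ρ1)) + ↑(i • g0)))) by
    exact H f.natDegree f rfl hdeg
  intro d
  induction d using Nat.strong_induction_on with
  | _ d IH =>
  intro f hfd hdeg
  by_cases hf0 : 0 < f.degree
  swap
  · -- constant case
    push_neg at hf0
    have hC := Polynomial.eq_C_of_degree_le_zero hf0
    refine ⟨v (f.coeff 0), Filter.Eventually.of_forall fun σ => ?_, fun h => absurd h (not_lt.mpr hf0)⟩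
    conv_lhs => rw [hC]
    rw [Polynomial.eval_C]
  -- main case
  have hfne : f ≠ 0 := fun h => by simp [h] at hf0
  have hdegeq : f.degree = (d : WithBot ℕ) := by
    rw [Polynomial.degree_eq_natDegree hfne, hfd]
  have hd1 : 1 ≤ d := by
    rw [hdegeq] at hf0
    have : (0:ℕ) < d := by exact_mod_cast hf0
    omega
  have hIH : ∀ i : ℕ, ∃ β : WithTop Γ,
      i ∈ Finset.Icc 1 d → ∀ᶠ ρ in atTop, v ((Polynomial.hasseDeriv i f).eval (a ρ)) = β := by
    intro i
    by_cases hi : i ∈ Finset.Icc 1 d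
    · obtain ⟨hi1, hid⟩ := Finset.mem_Icc.mp hi
      have hnd : (Polynomial.hasseDeriv i f).natDegree < d := by
        have := Polynomial.natDegree_hasseDeriv_le f i
        rw [hfd] at this
        omega
      have hdeg' : (Polynomial.hasseDeriv i f).degree < q.degree := by
        refine lt_of_le_of_lt (Polynomial.degree_le_natDegree) (lt_of_lt_of_le ?_ hdeg.le)
        rw [hdegeq]
        exact_mod_cast hnd
      obtain ⟨β, hβ, -⟩ := IH (Polynomial.hasseDeriv i f).natDegree hnd (Polynomial.hasseDeriv i f) rfl hdeg'
      exact ⟨β, fun _ => hβ⟩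
    · exact ⟨⊤, fun hmem => absurd hmem hi⟩
  choose β hβ using hIH
  -- top coefficient
  have hhd : Polynomial.hasseDeriv d f = Polynomial.C (f.coeff d) := by
    have hnd : (Polynomial.hasseDeriv d f).natDegree ≤ 0 := by
      have := Polynomial.natDegree_hasseDeriv_le f d
      rw [hfd] at this
      omega
    have := Polynomial.eq_C_of_natDegree_le_zero hnd
    rw [this, Polynomial.hasseDeriv_coeff, Nat.zero_add, Nat.choose_self]
    push_cast
    rw [one_mul]
  have hcd : f.coeff d ≠ 0 := by
    rw [← hfd]
    exact Polynomial.leadingCoeff_ne_zero.mpr hfne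
  have hdIcc : d ∈ Finset.Icc 1 d := Finset.mem_Icc.mpr ⟨hd1, le_rfl⟩
  have hβd : β d = v (f.coeff d) := by
    obtain ⟨ρ, hρ⟩ := (hβ d hdIcc).exists
    rw [← hρ, hhd, Polynomial.eval_C]
  have hβdne : β d ≠ ⊤ := by
    rw [hβd]
    exact fun hc => hcd ((hvf _).mp hc)
  set S : Finset ℕ := (Finset.Icc 1 d).filter (fun i => β i ≠ ⊤) with hS
  have hdS : d ∈ S := Finset.mem_filter.mpr ⟨hdIcc, hβdne⟩
  have hScoe : ∀ i ∈ S, β i = ↑((β i).untopD 0) := by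
    intro i hi
    have := (Finset.mem_filter.mp hi).2
    cases e : β i with
    | top => exact absurd e this
    | coe t => rw [WithTop.untopD_coe]
  set β' : ℕ → Γ := fun i => (β i).untopD 0 with hβ'
  set F : ℕ → ι → Γ := fun i ρ => β' i + i • γ' ρ with hF
  have hFmono : ∀ i, 1 ≤ i → StrictMono (F i) := by
    intro i hi ρ σ hρσ
    have h1 : i • γ' ρ < i • γ' σ := by
      have h2 : (0:Γ) < i • (γ' σ - γ' ρ) :=
        nsmul_pos (sub_pos.mpr (hγmono hρσ)) (by omega)
      rw [nsmul_sub] at h2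
      exact sub_pos.mp h2
    exact add_lt_add_right h1 _
  -- pairwise comparison
  have CMP : ∀ i j : ℕ, i < j →
      (∀ᶠ ρ in atTop, F i ρ < F j ρ) ∨ (∀ᶠ ρ in atTop, F j ρ < F i ρ) := by
    intro i j hij
    by_cases hex : ∃ ρ, F i ρ ≤ F j ρ
    · left
      obtain ⟨ρw, hρw⟩ := hex
      obtain ⟨b, hb⟩ := exists_gt ρw
      refine eventually_atTop.mpr ⟨b, fun σ hσ => ?_⟩
      have hρσ : ρw < σ := lt_of_lt_of_le hb hσ
      have h1 : (0:Γ) < (j - i) • (γ' σ - γ' ρw) :=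
        nsmul_pos (sub_pos.mpr (hγmono hρσ)) (by omega)
      have h2 : (F j σ - F i σ) - (F j ρw - F i ρw) = (j - i) • (γ' σ - γ' ρw) := by
        simp only [hF, nsmul_sub, sub_nsmul (γ' σ) hij.le, sub_nsmul (γ' ρw) hij.le]
        abel
      have h3 : (0:Γ) ≤ F j ρw - F i ρw := sub_nonneg.mpr hρw
      have h4 : (0:Γ) < F j σ - F i σ := by
        have h5 := add_pos_of_pos_of_nonneg h1 h3
        rw [← h2, sub_add_cancel] at h5
        exact h5
      exact sub_pos.mp h4
    · right
      push_neg at hex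
      exact Filter.Eventually.of_forall hex
  set R : ℕ → ℕ → Prop := fun i j => ∀ᶠ ρ in atTop, F i ρ < F j ρ with hR
  have hord : ∀ i ∈ S, ∀ j ∈ S, i < j → ∀ᶠ ρ in atTop,
      ((R i j → F i ρ < F j ρ) ∧ (¬ R i j → F j ρ < F i ρ)) := by
    intro i _ j _ hij
    by_cases hRij : R i j
    · exact hRij.mono fun ρ hρ => ⟨fun _ => hρ, fun hc => absurd hRij hc⟩
    · exact ((CMP i j hij).resolve_left hRij).mono fun ρ hρ =>
        ⟨fun hc => absurd hc hRij, fun _ => hρ⟩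
  have hEV : ∀ᶠ ρ in atTop,
      (∀ i ∈ Finset.Icc 1 d, v ((Polynomial.hasseDeriv i f).eval (a ρ)) = β i) ∧
      (∀ i ∈ S, ∀ j ∈ S, i < j →
        ((R i j → F i ρ < F j ρ) ∧ (¬ R i j → F j ρ < F i ρ))) := by
    refine ((Filter.eventually_all_finset _).mpr (fun i hi => hβ i hi)).and ?_
    refine (Filter.eventually_all_finset S).mpr fun i hi => ?_
    exact (Filter.eventually_all_finset S).mpr fun j hj => by
      by_cases hij : i < j
      · exact (hord i hi j hj hij).mono fun ρ hρ _ => hρ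
      · exact Filter.Eventually.of_forall fun ρ hij' => absurd hij' hij
  obtain ⟨ρT, hT⟩ := eventually_atTop.mp hEV
  -- the minimizing index
  obtain ⟨i0, hi0S, hi0min⟩ := S.exists_min_image (fun i => F i ρT) ⟨d, hdS⟩
  have hi01 : 1 ≤ i0 := (Finset.mem_Icc.mp (Finset.mem_filter.mp hi0S).1).1
  have hi0d : i0 ≤ d := (Finset.mem_Icc.mp (Finset.mem_filter.mp hi0S).1).2
  have strictmin : ∀ ρ, ρT ≤ ρ → ∀ i ∈ S, i ≠ i0 → F i0 ρ < F i ρ := by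
    intro ρ hρ i hiS hne
    rcases lt_or_gt_of_ne hne with hlt | hgt
    · have hp := (hT ρ hρ).2 i hiS i0 hi0S hlt
      by_cases hRii : R i i0
      · have := ((hT ρT le_rfl).2 i hiS i0 hi0S hlt).1 hRii
        exact absurd (hi0min i hiS) (not_le.mpr this)
      · exact hp.2 hRii
    · have hp := (hT ρ hρ).2 i0 hi0S i hiS hgt
      by_cases hRii : R i0 i
      · exact hp.1 hRii
      · have := ((hT ρT le_rfl).2 i0 hi0S i hiS hgt).2 hRii
        exact absurd (hi0min i hiS) (not_le.mpr this)
  -- per-point min data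
  have hGmin : ∀ ρ : ι, ρT ≤ ρ →
      (v ((Polynomial.hasseDeriv i0 f).eval (a ρ)) + ↑(i0 • γ' ρ) = (↑(F i0 ρ) : WithTop Γ)) ∧
      (∀ i ∈ Finset.Icc 1 d, i ≠ i0 →
        (↑(F i0 ρ) : WithTop Γ) < v ((Polynomial.hasseDeriv i f).eval (a ρ)) + ↑(i • γ' ρ)) := by
    intro ρ hρ
    constructor
    · rw [(hT ρ hρ).1 i0 (Finset.mem_filter.mp hi0S).1, hScoe i0 hi0S, ← WithTop.coe_add]
    · intro i hi hne
      by_cases hiS : i ∈ S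
      · rw [(hT ρ hρ).1 i hi, hScoe i hiS, ← WithTop.coe_add]
        exact_mod_cast strictmin ρ hρ i hiS hne
      · have hβtop : β i = ⊤ := by
          by_contra hc
          exact hiS (Finset.mem_filter.mpr ⟨hi, hc⟩)
        rw [(hT ρ hρ).1 i hi, hβtop, top_add]
        exact WithTop.coe_lt_top _
  have hi0Icc : i0 ∈ Finset.Icc 1 d := (Finset.mem_filter.mp hi0S).1
  -- the specialization to K itself
  have hKstep : ∀ ρ : ι, ρT ≤ ρ → ∀ σ : ι, ρ < σ →
      v (f.eval (a σ) - f.eval (a ρ)) = ↑(F i0 ρ) := by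
    intro ρ hρ σ hσ
    have := key_eval v v hv (fun c => by simp) f d hfd (a ρ) (a σ) (γ' ρ)
      (by simpa using hγ' ρ σ hσ) i0 hi0Icc (F i0 ρ) (hGmin ρ hρ).1 (hGmin ρ hρ).2
    rwa [show (Polynomial.aeval (a σ)) f = f.eval (a σ) from
      congrFun (Polynomial.coe_aeval_eq_eval (a σ)) f,
      show algebraMap K K (f.eval (a ρ)) = f.eval (a ρ) by simp] at this
  -- existence of ρ1
  have hρ1 : ∃ ρ1, ρT ≤ ρ1 ∧ v (f.eval (a ρ1)) < ↑(F i0 ρ1) := by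
    by_contra hcon
    push_neg at hcon
    have hall : ∀ ρ, ρT ≤ ρ → v (f.eval (a ρ)) = ↑(F i0 ρ) := by
      intro ρ hρ
      rcases eq_or_lt_of_le (hcon ρ hρ) with he | hlt
      · exact he.symm
      · exfalso
        obtain ⟨σ, hσ⟩ := exists_gt ρ
        have h1 := hKstep ρ hρ σ hσ
        have h2 : v (f.eval (a σ)) = ↑(F i0 ρ) := by
          have he : f.eval (a σ) = (f.eval (a σ) - f.eval (a ρ)) + f.eval (a ρ) := by ring
          rw [he, hv.add_eq_left (by rw [h1]; exact hlt), h1]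
        have h3 := hcon σ (hρ.trans hσ.le)
        rw [h2] at h3
        exact absurd (WithTop.coe_le_coe.mp h3) (not_le.mpr (hFmono i0 hi01 hσ))
    refine absurd (hqmin f ⟨ρT, fun ρ σ hρ hσ => ?_⟩) (not_le.mpr hdeg)
    rw [hall ρ hρ, hall σ (hρ.trans hσ.le)]
    exact_mod_cast hFmono i0 hi01 hσ
  obtain ⟨ρ1, hρ1T, hρ1lt⟩ := hρ1
  refine ⟨v (f.eval (a ρ1)), ?_, fun _ => ⟨ρ1, F i0 ρ1, hρ1lt, rfl, ?_, ?_⟩⟩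
  · obtain ⟨b, hb⟩ := exists_gt ρ1
    refine eventually_atTop.mpr ⟨b, fun σ hσ => ?_⟩
    have h1 := hKstep ρ1 hρ1T σ (lt_of_lt_of_le hb hσ)
    have he : f.eval (a σ) = (f.eval (a σ) - f.eval (a ρ1)) + f.eval (a ρ1) := by ring
    rw [he, add_comm]
    have := hv.add_eq_left (x := f.eval (a ρ1)) (y := f.eval (a σ) - f.eval (a ρ1))
      (by rw [h1]; exact hρ1lt)
    rw [this]
  · exact fun σ hσ => hKstep ρ1 hρ1T σ hσ
  · simp only [hfd]
    exact ⟨i0, hi0Icc, γ' ρ1, fun σ hσ => hγ' ρ1 σ hσ,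
      (hGmin ρ1 hρ1T).1, (hGmin ρ1 hρ1T).2⟩

open IntermediateField in
/-- **Theorem 3 of [Kap]**: let `{a_ρ}_{ρ<λ}` be a pseudo-convergent sequence of
algebraic type in `(K,ν)` without a limit in `K`, let `q` be a polynomial of smallest
degree whose values `ν(q(a_ρ))` are eventually strictly increasing, and let `z` be a
root of `q` (in an algebraic closure of `K`). Then there is an immediate algebraic
extension of `ν` to `K(z)` such that for all `f` with `deg f < deg q`, `ν(f(z))` is the
eventually constant value `ν(f(a_ρ))`; moreover for every root `u` of `q` in a valued
extension `(K(u), μ)` of `(K,ν)` making `u` a limit of `{a_ρ}`, the `K`-map sending `u`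
to `z` is value-preserving (so it induces a value-preserving `K`-isomorphism from
`K(u)` onto `K(z)`). -/
theorem kaplansky_algebraic_type {K : Type*} [Field K]
    {Γ : Type*} [AddCommGroup Γ] [LinearOrder Γ] [IsOrderedAddMonoid Γ]
    {ι : Type*} [LinearOrder ι] [WellFoundedLT ι] [NoMaxOrder ι] [Nonempty ι]
    (v : K → WithTop Γ) (hv : IsVal v) (hvf : ∀ c : K, v c = ⊤ ↔ c = 0)
    (a : ι → K)
    (hpcs : ∀ ρ σ τ : ι, ρ < σ → σ < τ → v (a σ - a ρ) < v (a τ - a σ))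
    (halg : ¬ ∀ f : K[X], ∃ ρf : ι, ∀ σ : ι, ρf ≤ σ →
      v (f.eval (a σ)) = v (f.eval (a ρf)))
    (hnolim : ¬∃ z : K, ∀ ρ σ : ι, ρ < σ → v (z - a ρ) = v (a σ - a ρ))
    (q : K[X])
    (hq : ∃ ρ0 : ι, ∀ ρ σ : ι, ρ0 ≤ ρ → ρ < σ → v (q.eval (a ρ)) < v (q.eval (a σ)))
    (hqmin : ∀ f : K[X],
      (∃ ρ0 : ι, ∀ ρ σ : ι, ρ0 ≤ ρ → ρ < σ → v (f.eval (a ρ)) < v (f.eval (a σ))) →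
      q.degree ≤ f.degree)
    (z : AlgebraicClosure K) (hz : Polynomial.aeval z q = 0) :
    ∃ w : K⟮z⟯ → WithTop Γ,
      IsVal w ∧
      (∀ y : K⟮z⟯, w y = ⊤ ↔ y = 0) ∧
      (∀ c : K, w (algebraMap K K⟮z⟯ c) = v c) ∧
      (∀ f : K[X], f.degree < q.degree →
        ∃ ρf : ι, ∀ σ : ι, ρf ≤ σ →
          w (Polynomial.aeval (AdjoinSimple.gen K z) f) = v (f.eval (a σ))) ∧
      (∀ y : K⟮z⟯, y ≠ 0 → ∃ c : K, w y < w (y - algebraMap K K⟮z⟯ c)) ∧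
      (∀ (L : Type*) [Field L] [Algebra K L] (μ : L → WithTop Γ),
        IsVal μ → (∀ y : L, μ y = ⊤ ↔ y = 0) →
        (∀ c : K, μ (algebraMap K L c) = v c) →
        ∀ u : L, Polynomial.aeval u q = 0 →
          (∀ ρ σ : ι, ρ < σ → μ (u - algebraMap K L (a ρ)) = v (a σ - a ρ)) →
          ∀ f : K[X], μ (Polynomial.aeval u f) =
            w (Polynomial.aeval (AdjoinSimple.gen K z) f)) := by
  classical
  obtain ⟨ρq, hρq⟩ := hq
  have hq0 : q ≠ 0 := by
    rintro rfl
    obtain ⟨σ, hσ⟩ := exists_gt ρq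
    simpa using hρq ρq σ le_rfl hσ
  have hzint : IsIntegral K z := isAlgebraic_iff_isIntegral.mp ⟨q, hq0, hz⟩
  set m : K[X] := minpoly K z with hm
  have hmdvd : m ∣ q := minpoly.dvd K z hz
  have hmmonic : m.Monic := minpoly.monic hzint
  have hm0 : m ≠ 0 := hmmonic.ne_zero
  have hmdegpos : 0 < m.degree := minpoly.degree_pos hzint
  have hmnatpos : 0 < m.natDegree := Polynomial.natDegree_pos_iff_degree_pos.mpr hmdegpos
  -- auxiliary: nonzero polynomials have non-⊤ eventual values
  have hane : ∀ ρ σ : ι, ρ < σ → v (a σ - a ρ) ≠ ⊤ := by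
    intro ρ σ h
    obtain ⟨τ, hτ⟩ := exists_gt σ
    exact (hpcs ρ σ τ h hτ).ne_top
  have hainj : Function.Injective a := by
    intro x y hxy
    by_contra hne
    rcases lt_or_gt_of_ne hne with h | h
    · exact hane x y h (by rw [hxy, sub_self, (hvf 0).mpr rfl])
    · exact hane y x h (by rw [hxy, sub_self, (hvf 0).mpr rfl])
  have hnontop : ∀ (f : K[X]) (c : WithTop Γ), f ≠ 0 →
      (∀ᶠ σ in atTop, v (f.eval (a σ)) = c) → c ≠ ⊤ := by
    intro f c hf0 hev
    have hfin : {σ : ι | f.eval (a σ) = 0}.Finite := by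
      have : {σ : ι | f.eval (a σ) = 0} ⊆ a ⁻¹' {x | f.IsRoot x} := fun σ hσ => hσ
      exact Set.Finite.subset ((Polynomial.finite_setOf_isRoot hf0).preimage hainj.injOn) this
    obtain ⟨ub, hub⟩ := hfin.bddAbove
    obtain ⟨b, hb⟩ := exists_gt ub
    have hev2 : ∀ᶠ σ in atTop, f.eval (a σ) ≠ 0 := by
      refine eventually_atTop.mpr ⟨b, fun σ hσ => fun hc => ?_⟩
      exact absurd (hub hc) (not_le.mpr (lt_of_lt_of_le hb hσ))
    obtain ⟨σ, h1, h2⟩ := (hev.and hev2).exists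
    rw [← h1]
    exact fun hc => h2 ((hvf _).mp hc)
  -- degree m = degree q
  have hmdeg : m.degree = q.degree := by
    refine le_antisymm (Polynomial.degree_le_of_dvd hmdvd hq0) ?_
    by_contra hc
    push_neg at hc
    obtain ⟨t, ht⟩ := hmdvd
    have ht0 : t ≠ 0 := fun h => hq0 (by rw [ht, h, mul_zero])
    have htdeg : t.degree < q.degree := by
      have h1 : q.natDegree = m.natDegree + t.natDegree := by
        rw [ht, Polynomial.natDegree_mul hm0 ht0]
      rw [Polynomial.degree_eq_natDegree ht0, Polynomial.degree_eq_natDegree hq0]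
      exact_mod_cast by omega
    have hmdeg' : m.degree < q.degree := hc
    obtain ⟨γm, hγm, -⟩ := fix_lemma v hv hvf a hpcs q hqmin m hmdeg'
    obtain ⟨γt, hγt, -⟩ := fix_lemma v hv hvf a hpcs q hqmin t htdeg
    obtain ⟨ρ0, h0⟩ := eventually_atTop.mp (hγm.and hγt)
    set ρ := max ρ0 ρq with hρdef
    obtain ⟨σ, hσ⟩ := exists_gt ρ
    have e : ∀ τ, ρ ≤ τ → v (q.eval (a τ)) = γm + γt := by
      intro τ hτ
      have h1 := h0 τ (le_trans (le_max_left _ _) hτ)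
      rw [ht, Polynomial.eval_mul, hv.1, h1.1, h1.2]
    have := hρq ρ σ (le_max_right _ _) hσ
    rw [e ρ le_rfl, e σ (le_of_lt (lt_of_le_of_lt le_rfl hσ))] at this
    exact lt_irrefl _ this
  have hqdegpos : 0 < q.degree := hmdeg ▸ hmdegpos
  -- q = C (leadingCoeff q) * m
  have hlc0 : q.leadingCoeff ≠ 0 := Polynomial.leadingCoeff_ne_zero.mpr hq0
  have hqm : q = Polynomial.C q.leadingCoeff * m := by
    have hu : m ∣ (q - Polynomial.C q.leadingCoeff * m) :=
      dvd_sub hmdvd (Dvd.intro_left _ rfl)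
    by_cases hzero : q - Polynomial.C q.leadingCoeff * m = 0
    · exact sub_eq_zero.mp hzero
    · exfalso
      have hdeq : q.degree = (Polynomial.C q.leadingCoeff * m).degree := by
        rw [Polynomial.degree_mul, Polynomial.degree_C hlc0, zero_add, hmdeg]
      have hlceq : q.leadingCoeff = (Polynomial.C q.leadingCoeff * m).leadingCoeff := by
        rw [Polynomial.leadingCoeff_mul, Polynomial.leadingCoeff_C,
          hmmonic.leadingCoeff, mul_one]
      have hlt := Polynomial.degree_sub_lt hdeq hq0 hlceq
      have := Polynomial.degree_le_of_dvd hu hzero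
      rw [hmdeg] at this
      exact absurd hlt (not_lt.mpr this)
  have hvlcne : v q.leadingCoeff ≠ ⊤ := fun h => hlc0 ((hvf _).mp h)
  -- values of m are strictly increasing on the tail
  have hminc : ∀ ρ σ : ι, ρq ≤ ρ → ρ < σ → v (m.eval (a ρ)) < v (m.eval (a σ)) := by
    intro ρ σ hρ hσ
    have h1 := hρq ρ σ hρ hσ
    rw [hqm] at h1
    simp only [Polynomial.eval_mul, Polynomial.eval_C, hv.1] at h1
    exact lt_of_add_lt_add_left h1
  -- the generator
  set g : K⟮z⟯ := AdjoinSimple.gen K z with hg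
  have hgm : Polynomial.aeval g m = 0 := aeval_gen_minpoly K z
  have hbotq : (⊥ : WithBot ℕ) < q.degree :=
    lt_of_lt_of_le (WithBot.bot_lt_coe 0) hqdegpos.le
  have hdeg0 : (0 : K[X]).degree < q.degree := by
    rw [Polynomial.degree_zero]; exact hbotq
  -- uniqueness of small-degree representatives
  have huniq : ∀ f : K[X], f.degree < q.degree → Polynomial.aeval g f = 0 → f = 0 := by
    intro f hf h0
    have hzf : Polynomial.aeval z f = 0 := by
      have h1 : algebraMap K⟮z⟯ (AlgebraicClosure K) (Polynomial.aeval g f)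
          = Polynomial.aeval z f := by
        rw [← Polynomial.aeval_algebraMap_apply, AdjoinSimple.algebraMap_gen]
      rw [← h1, h0, map_zero]
    have hdvd : m ∣ f := minpoly.dvd K z hzf
    by_contra hf0
    have := Polynomial.degree_le_of_dvd hdvd hf0
    rw [hmdeg] at this
    exact absurd hf this.not_gt
  -- existence of representatives
  have hrepex : ∀ y : K⟮z⟯, ∃ f : K[X], f.degree < q.degree ∧ Polynomial.aeval g f = y := by
    intro y
    obtain ⟨f0, hf0⟩ := (IntermediateField.adjoin.powerBasis hzint).exists_eq_aeval' y
    have hgen : (IntermediateField.adjoin.powerBasis hzint).gen = g := rfl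
    rw [hgen] at hf0
    refine ⟨f0 %ₘ m, hmdeg ▸ Polynomial.degree_modByMonic_lt f0 hmmonic, ?_⟩
    have h1 : f0 %ₘ m + m * (f0 /ₘ m) = f0 := Polynomial.modByMonic_add_div f0 m
    have h2 : Polynomial.aeval g (f0 %ₘ m + m * (f0 /ₘ m)) = Polynomial.aeval g f0 := by
      rw [h1]
    rw [map_add, map_mul, hgm, zero_mul, add_zero] at h2
    rw [h2, hf0]
  -- the valuation
  have hKEYW : ∀ y : K⟮z⟯, ∃ p : K[X] × WithTop Γ, p.1.degree < q.degree ∧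
      Polynomial.aeval g p.1 = y ∧ ∀ᶠ σ in atTop, v (p.1.eval (a σ)) = p.2 := by
    intro y
    obtain ⟨f, hf1, hf2⟩ := hrepex y
    obtain ⟨γ, hγ, -⟩ := fix_lemma v hv hvf a hpcs q hqmin f hf1
    exact ⟨(f, γ), hf1, hf2, hγ⟩
  choose P hPdeg hPrep hPev using hKEYW
  have hfP : ∀ y f, f.degree < q.degree → Polynomial.aeval g f = y → f = (P y).1 := by
    intro y f h1 h2
    have hd : (f - (P y).1).degree < q.degree :=
      lt_of_le_of_lt (Polynomial.degree_sub_le _ _) (max_lt h1 (hPdeg y))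
    have h0 : Polynomial.aeval g (f - (P y).1) = 0 := by
      rw [map_sub, h2, hPrep y, sub_self]
    exact sub_eq_zero.mp (huniq _ hd h0)
  have hwval : ∀ y f, f.degree < q.degree → Polynomial.aeval g f = y →
      ∀ᶠ σ in atTop, v (f.eval (a σ)) = (P y).2 := by
    intro y f h1 h2
    rw [hfP y f h1 h2]
    exact hPev y
  have hEVU : ∀ y f (c : WithTop Γ), f.degree < q.degree → Polynomial.aeval g f = y →
      (∀ᶠ σ in atTop, v (f.eval (a σ)) = c) → (P y).2 = c := by
    intro y f c h1 h2 hev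
    obtain ⟨σ, h3, h4⟩ := ((hwval y f h1 h2).and hev).exists
    rw [← h3, h4]
  have hw0 : (P 0).2 = ⊤ :=
    hEVU 0 0 ⊤ hdeg0 (map_zero _) (Filter.Eventually.of_forall fun σ => by
      rw [Polynomial.eval_zero]; exact hv.2.2.2)
  have hPne0 : ∀ y : K⟮z⟯, y ≠ 0 → (P y).1 ≠ 0 := by
    intro y hy hc
    exact hy (by rw [← hPrep y, hc, map_zero])
  have hwtop : ∀ y : K⟮z⟯, (P y).2 = ⊤ ↔ y = 0 := by
    intro y
    constructor
    · intro h
      by_contra hy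
      exact hnontop _ _ (hPne0 y hy) (hPev y) h
    · rintro rfl
      exact hw0
  have hwalg : ∀ c : K, (P (algebraMap K K⟮z⟯ c)).2 = v c := by
    intro c
    refine hEVU _ (Polynomial.C c) (v c) ?_ (Polynomial.aeval_C g c) ?_
    · exact lt_of_le_of_lt Polynomial.degree_C_le hqdegpos
    · exact Filter.Eventually.of_forall fun σ => by rw [Polynomial.eval_C]
  have hnatlt : ∀ f : K[X], f ≠ 0 → f.degree < q.degree → f.natDegree < m.natDegree := by
    intro f hf0 hfd
    have h1 : f.degree < m.degree := hmdeg ▸ hfd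
    rw [Polynomial.degree_eq_natDegree hf0, Polynomial.degree_eq_natDegree hm0] at h1
    exact_mod_cast h1
  -- multiplicativity
  have hmul : ∀ y y' : K⟮z⟯, (P (y * y')).2 = (P y).2 + (P y').2 := by
    intro y y'
    rcases eq_or_ne y 0 with rfl | hy0
    · rw [zero_mul, hw0, top_add]
    rcases eq_or_ne y' 0 with rfl | hy'0
    · rw [mul_zero, hw0, add_top]
    set f := (P y).1 with hfdef
    set f' := (P y').1 with hf'def
    have hf0 : f ≠ 0 := hPne0 y hy0
    have hf'0 : f' ≠ 0 := hPne0 y' hy'0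
    set r := (f * f') %ₘ m with hrdef
    set t := (f * f') /ₘ m with htdef
    have hrt : r + m * t = f * f' := Polynomial.modByMonic_add_div _ m
    have hrrep : Polynomial.aeval g r = y * y' := by
      have h1 : Polynomial.aeval g (r + m * t) = Polynomial.aeval g (f * f') := by rw [hrt]
      rw [map_add, map_mul, hgm, zero_mul, add_zero, map_mul, hPrep y, hPrep y'] at h1
      exact h1
    have hrdeg : r.degree < q.degree := hmdeg ▸ Polynomial.degree_modByMonic_lt _ hmmonic
    have hff' : ∀ᶠ σ in atTop, v ((f * f').eval (a σ)) = (P y).2 + (P y').2 :=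
      ((hPev y).and (hPev y')).mono fun σ hσ => by
        rw [Polynomial.eval_mul, hv.1, hσ.1, hσ.2]
    rcases eq_or_ne t 0 with ht0 | ht0
    · have : r = f * f' := by rw [← hrt, ht0, mul_zero, add_zero]
      exact hEVU _ r _ hrdeg hrrep (this ▸ hff')
    · have htdeg : t.degree < q.degree := by
        have h1 : t.natDegree = (f * f').natDegree - m.natDegree :=
          Polynomial.natDegree_divByMonic _ hmmonic
        have h2 : (f * f').natDegree = f.natDegree + f'.natDegree :=
          Polynomial.natDegree_mul hf0 hf'0
        have h3 := hnatlt f hf0 (hPdeg y)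
        have h4 := hnatlt f' hf'0 (hPdeg y')
        have h5 : t.natDegree < m.natDegree := by omega
        rw [Polynomial.degree_eq_natDegree ht0, ← hmdeg,
          Polynomial.degree_eq_natDegree hm0]
        exact_mod_cast h5
      obtain ⟨βt, hβt, -⟩ := fix_lemma v hv hvf a hpcs q hqmin t htdeg
      have hβtne : βt ≠ ⊤ := hnontop t βt ht0 hβt
      refine hEVU _ r _ hrdeg hrrep ?_
      -- show the eventual value of r is the sum
      have hmt : m * t = f * f' - r := eq_sub_of_add_eq' hrt
      by_contra hcon
      have hrev := hwval _ r hrdeg hrrep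
      have hβr : (P (y * y')).2 ≠ (P y).2 + (P y').2 := by
        intro hc
        exact hcon (hrev.mono fun σ hσ => by rw [hσ, hc])
      obtain ⟨ρ0, h0⟩ := eventually_atTop.mp ((hrev.and hff').and hβt)
      set ρ := max ρ0 ρq with hρdef
      obtain ⟨σ, hσ⟩ := exists_gt ρ
      have hval : ∀ τ, ρ ≤ τ → v ((m * t).eval (a τ)) =
          min ((P y).2 + (P y').2) (P (y * y')).2 := by
        intro τ hτ
        have h1 := h0 τ (le_trans (le_max_left _ _) hτ)
        have h2 : (m * t).eval (a τ) = (f * f').eval (a τ) - r.eval (a τ) := by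
          rw [hmt, Polynomial.eval_sub]
        rw [h2, hv.sub_eq_min (by rw [h1.1.1, h1.1.2]; exact fun hc => hβr hc.symm),
          h1.1.1, h1.1.2]
      have hstrict : v ((m * t).eval (a ρ)) < v ((m * t).eval (a σ)) := by
        have h1 := h0 ρ (le_max_left _ _)
        have h2 := h0 σ (le_trans (le_max_left _ _) hσ.le)
        rw [Polynomial.eval_mul, Polynomial.eval_mul, hv.1, hv.1, h1.2, h2.2]
        exact WithTop.add_lt_add_right hβtne
          (hminc ρ σ (le_max_right _ _) hσ)
      rw [hval ρ le_rfl, hval σ hσ.le] at hstrict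
      exact lt_irrefl _ hstrict
  refine ⟨fun y => (P y).2, ⟨hmul, ?_, ?_, hw0⟩, hwtop, hwalg, ?_, ?_, ?_⟩
  · -- additivity
    intro y y'
    have hadd : Polynomial.aeval g ((P y).1 + (P y').1) = y + y' := by
      rw [map_add, hPrep y, hPrep y']
    have hd : ((P y).1 + (P y').1).degree < q.degree :=
      lt_of_le_of_lt (Polynomial.degree_add_le _ _) (max_lt (hPdeg y) (hPdeg y'))
    obtain ⟨σ, ⟨h1, h2⟩, h3⟩ := (((hwval _ _ hd hadd).and (hPev y)).and (hPev y')).exists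
    show min ((P y).2) ((P y').2) ≤ (P (y + y')).2
    rw [← h1, ← h2, ← h3, Polynomial.eval_add]
    exact hv.2.1 _ _
  · -- w 1 = 0
    refine hEVU 1 1 0 ?_ (map_one _) (Filter.Eventually.of_forall fun σ => by
      rw [Polynomial.eval_one]; exact hv.2.2.1)
    rw [Polynomial.degree_one]; exact hqdegpos
  · -- eventual values
    intro f hf
    obtain ⟨ρf, hρf⟩ := eventually_atTop.mp (hwval _ f hf rfl)
    exact ⟨ρf, fun σ hσ => (hρf σ hσ).symm⟩
  · -- immediacy
    intro y hy
    by_cases hfdeg : 0 < (P y).1.degree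
    · obtain ⟨γ, hev, hrest⟩ := fix_lemma v hv hvf a hpcs q hqmin (P y).1 (hPdeg y)
      obtain ⟨ρ1, δ, hγδ, hv1, hdiff, -⟩ := hrest hfdeg
      have hγw : (P y).2 = γ := hEVU y (P y).1 γ (hPdeg y) (hPrep y) hev
      refine ⟨(P y).1.eval (a ρ1), ?_⟩
      have hrep2 : Polynomial.aeval g ((P y).1 - Polynomial.C ((P y).1.eval (a ρ1)))
          = y - algebraMap K K⟮z⟯ ((P y).1.eval (a ρ1)) := by
        rw [map_sub, hPrep y, Polynomial.aeval_C]
      have hd2 : ((P y).1 - Polynomial.C ((P y).1.eval (a ρ1))).degree < q.degree :=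
        lt_of_le_of_lt (Polynomial.degree_sub_le _ _)
          (max_lt (hPdeg y) (lt_of_le_of_lt Polynomial.degree_C_le hqdegpos))
      obtain ⟨b, hb⟩ := exists_gt ρ1
      have hev2 : ∀ᶠ σ in atTop,
          v ((((P y).1 - Polynomial.C ((P y).1.eval (a ρ1)))).eval (a σ)) = ↑δ :=
        eventually_atTop.mpr ⟨b, fun σ hσ => by
          rw [Polynomial.eval_sub, Polynomial.eval_C]
          exact hdiff σ (lt_of_lt_of_le hb hσ)⟩
      have h4 := hEVU _ _ _ hd2 hrep2 hev2
      show (P y).2 < (P (y - algebraMap K K⟮z⟯ ((P y).1.eval (a ρ1)))).2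
      rw [h4, hγw]
      exact hγδ
    · push_neg at hfdeg
      refine ⟨(P y).1.coeff 0, ?_⟩
      have hC := Polynomial.eq_C_of_degree_le_zero hfdeg
      have hyc : y = algebraMap K K⟮z⟯ ((P y).1.coeff 0) := by
        conv_lhs => rw [← hPrep y, hC, Polynomial.aeval_C]
      have h0 : y - algebraMap K K⟮z⟯ ((P y).1.coeff 0) = 0 := by rw [← hyc, sub_self]
      show (P y).2 < (P (y - algebraMap K K⟮z⟯ ((P y).1.coeff 0))).2
      rw [h0, hw0]
      exact lt_top_iff_ne_top.mpr (fun hc => hy ((hwtop y).mp hc))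
  · -- uniqueness of the extension
    intro L _ _ μ hμ hμf hμext u hu hulim f
    have haeum : Polynomial.aeval u m = 0 := by
      have h1 : Polynomial.aeval u q =
          algebraMap K L q.leadingCoeff * Polynomial.aeval u m := by
        conv_lhs => rw [hqm]
        rw [map_mul, Polynomial.aeval_C]
      have h2 : algebraMap K L q.leadingCoeff * Polynomial.aeval u m = 0 := by
        rw [← h1, hu]
      rcases mul_eq_zero.mp h2 with h3 | h3
      · exact absurd ((_root_.map_eq_zero (algebraMap K L)).mp h3) hlc0
      · exact h3
    set r := f %ₘ m with hrdef
    have hfr : r + m * (f /ₘ m) = f := Polynomial.modByMonic_add_div f m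
    have hur : Polynomial.aeval u f = Polynomial.aeval u r := by
      conv_lhs => rw [← hfr]
      rw [map_add, map_mul, haeum, zero_mul, add_zero]
    have hgr : Polynomial.aeval g f = Polynomial.aeval g r := by
      conv_lhs => rw [← hfr]
      rw [map_add, map_mul, hgm, zero_mul, add_zero]
    have hrdeg : r.degree < q.degree := hmdeg ▸ Polynomial.degree_modByMonic_lt f hmmonic
    show μ (Polynomial.aeval u f) = (P (Polynomial.aeval g f)).2
    rw [hur, hgr]
    rcases eq_or_ne r 0 with hr0 | hr0
    · rw [hr0, map_zero, map_zero, hμ.2.2.2, hw0]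
    by_cases hrd : 0 < r.degree
    · obtain ⟨γ, hev, hrest⟩ := fix_lemma v hv hvf a hpcs q hqmin r hrdeg
      obtain ⟨ρ1, δ, hγδ, hv1, hdiff, i0, hi0, g0, hg0, hG, hmin⟩ := hrest hrd
      have hwr : (P (Polynomial.aeval g r)).2 = γ := hEVU _ r γ hrdeg rfl hev
      obtain ⟨σ, hσ⟩ := exists_gt ρ1
      have hbμ : μ (u - algebraMap K L (a ρ1)) = ↑g0 := by
        rw [hulim ρ1 σ hσ, hg0 σ hσ]
      have hkey := key_eval v μ hμ hμext r r.natDegree rfl (a ρ1) u g0 hbμ i0 hi0 δ hG hmin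
      have h2 : μ (algebraMap K L (r.eval (a ρ1))) = γ := by rw [hμext, hv1]
      have h3 : Polynomial.aeval u r = algebraMap K L (r.eval (a ρ1)) +
          (Polynomial.aeval u r - algebraMap K L (r.eval (a ρ1))) := by ring
      rw [h3, hμ.add_eq_left (by rw [h2, hkey]; exact hγδ), h2, hwr]
    · push_neg at hrd
      have hC := Polynomial.eq_C_of_degree_le_zero hrd
      rw [hC, Polynomial.aeval_C, Polynomial.aeval_C, hμext]
      exact (hwalg _).symm
end
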